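/- arXiv:2211.06920 — 2 statements merged into one kernel-verified Lean document; each statement's English description precedes it below -/
import Mathlib

section
/- For every δ > 0 and every constant C > 0 there exists n_0 such that for every n ≥ n_0 there exists an n-vertex unweighted undirected graph G with the following property: every (β,0)-hopset H for G (i.e., an exact hopset: dist^{(β)}_{G∪H}(u,v) = dist_G(u,v) for all u,v) with |H| ≤ C·n satisfies β ≥ n^{1/5−δ}. -/
open scoped ENNReal

namespace Hopsets

/-- A weighted directed graph on vertex type `V`: a finite edge set together
with a weight function. -/
structure WDigraph (V : Type) where
  edges : Finset (V × V)
  w : V × V → ℝ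

variable {V : Type}

/-- All edge weights are nonnegative. -/
def WDigraph.Nonneg (G : WDigraph V) : Prop := ∀ e, 0 ≤ G.w e

/-- Edge weights are polynomially bounded (degree `q`) in the number of vertices. -/
def WDigraph.PolyBounded [Fintype V] (G : WDigraph V) (q : ℕ) : Prop :=
  ∀ e ∈ G.edges, G.w e ≤ (Fintype.card V : ℝ) ^ q

/-- `G` encodes an undirected graph: edges come in symmetric pairs of equal weight. -/
def WDigraph.Symmetric (G : WDigraph V) : Prop :=
  ∀ e ∈ G.edges, (e.2, e.1) ∈ G.edges ∧ G.w (e.2, e.1) = G.w e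

/-- `G` is unweighted: every edge has weight `1`. -/
def WDigraph.Unweighted (G : WDigraph V) : Prop := ∀ e, G.w e = 1

/-- `IsWalkFrom G u v l` : the list of edges `l` forms a walk from `u` to `v` in `G`. -/
def IsWalkFrom (G : WDigraph V) : V → V → List (V × V) → Prop
  | u, v, [] => u = v
  | u, v, e :: l => e ∈ G.edges ∧ e.1 = u ∧ IsWalkFrom G e.2 v l

/-- The total weight of a walk, as an extended nonnegative real. -/
noncomputable def walkWeight (G : WDigraph V) (l : List (V × V)) : ℝ≥0∞ :=
  ENNReal.ofReal ((l.map G.w).sum)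

/-- `β`-hop-bounded distance: the infimum weight of a `u`-`v` walk with at most `β` edges. -/
noncomputable def WDigraph.hopDist (G : WDigraph V) (β : ℕ) (u v : V) : ℝ≥0∞ :=
  ⨅ l ∈ {l : List (V × V) | IsWalkFrom G u v l ∧ l.length ≤ β}, walkWeight G l

/-- Distance: infimum weight of a `u`-`v` walk (`∞` if there is none). -/
noncomputable def WDigraph.dist (G : WDigraph V) (u v : V) : ℝ≥0∞ :=
  ⨅ l ∈ {l : List (V × V) | IsWalkFrom G u v l}, walkWeight G l

/-- `v` is reachable from `u` in `G`. -/
def WDigraph.Reachable (G : WDigraph V) (u v : V) : Prop :=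
  ∃ l, IsWalkFrom G u v l

/-- The graph `G ∪ H` obtained by adding the edge set `H`, each added edge `(x,y)`
weighted by `dist_G(x,y)`. -/
noncomputable def WDigraph.augment [DecidableEq V] (G : WDigraph V) (H : Finset (V × V)) :
    WDigraph V where
  edges := G.edges ∪ H
  w := fun e => if e ∈ H then (G.dist e.1 e.2).toReal else G.w e

/-- `H` is a `(β,ε)`-hopset for `G`:
`dist_G(u,v) ≤ dist^{(β)}_{G∪H}(u,v) ≤ (1+ε)·dist_G(u,v)` for all `u, v`. -/
def IsHopset [DecidableEq V] (G : WDigraph V) (β : ℕ) (ε : ℝ) (H : Finset (V × V)) : Prop :=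
  ∀ u v, G.dist u v ≤ (G.augment H).hopDist β u v ∧
    (G.augment H).hopDist β u v ≤ ENNReal.ofReal (1 + ε) * G.dist u v

/-- The subgraph of `G` with edge set `E'` (same weights). -/
def WDigraph.sub (G : WDigraph V) (E' : Finset (V × V)) : WDigraph V :=
  ⟨E', G.w⟩

/-- `E'` (a subgraph of `G`) is an `r`-missing `t`-spanner: for every reachable pair
`(u,v)` there is a `u`-`v` walk in `G` of weight at most `t·dist_G(u,v)` with at most
`r` edges outside `E'`. -/
def IsMissingSpanner [DecidableEq V] (G : WDigraph V) (E' : Finset (V × V))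
    (r : ℕ) (t : ℝ) : Prop :=
  ∀ u v, G.Reachable u v → ∃ l, IsWalkFrom G u v l ∧
    walkWeight G l ≤ ENNReal.ofReal t * G.dist u v ∧
    (l.filter (fun e => decide (e ∉ E'))).length ≤ r

end Hopsets
namespace S17
open Hopsets

variable {V : Type}

lemma isWalkFrom_nil {G : WDigraph V} {u v : V} : IsWalkFrom G u v ([] : List (V × V)) ↔ u = v :=
  Iff.rfl

lemma isWalkFrom_cons {G : WDigraph V} {u v : V} {e : V × V} {l : List (V × V)} :
    IsWalkFrom G u v (e :: l) ↔ e ∈ G.edges ∧ e.1 = u ∧ IsWalkFrom G e.2 v l := Iff.rfl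

lemma dist_le_walk {G : WDigraph V} {u v : V} {l : List (V × V)} (h : IsWalkFrom G u v l) :
    G.dist u v ≤ walkWeight G l := by
  exact iInf₂_le l h

lemma le_dist {G : WDigraph V} {u v : V} {c : ℝ≥0∞}
    (h : ∀ l, IsWalkFrom G u v l → c ≤ walkWeight G l) : c ≤ G.dist u v := by
  exact le_iInf₂ fun l hl => h l hl

lemma hopDist_le_walk {G : WDigraph V} {β : ℕ} {u v : V} {l : List (V × V)}
    (h : IsWalkFrom G u v l) (hβ : l.length ≤ β) :
    G.hopDist β u v ≤ walkWeight G l := by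
  exact iInf₂_le l ⟨h, hβ⟩

lemma exists_walk_of_hopDist_lt {G : WDigraph V} {β : ℕ} {u v : V} {c : ℝ≥0∞}
    (h : G.hopDist β u v < c) :
    ∃ l, IsWalkFrom G u v l ∧ l.length ≤ β ∧ walkWeight G l < c := by
  rw [WDigraph.hopDist] at h
  rw [iInf_lt_iff] at h
  obtain ⟨l, hl⟩ := h
  rw [iInf_lt_iff] at hl
  obtain ⟨hmem, hw⟩ := hl
  exact ⟨l, hmem.1, hmem.2, hw⟩

/-- Weight of a walk as a natural-number sum when all edge weights are
natural valued. -/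
lemma walkWeight_eq_natSum {G : WDigraph V} (f : V × V → ℕ) {u v : V} {l : List (V × V)}
    (h : IsWalkFrom G u v l) (hw : ∀ e ∈ G.edges, G.w e = (f e : ℝ)) :
    walkWeight G l = (((l.map f).sum : ℕ) : ℝ≥0∞) := by
  have key : ∀ (l : List (V × V)) (u : V), IsWalkFrom G u v l →
      (l.map G.w).sum = (((l.map f).sum : ℕ) : ℝ) := by
    intro l
    induction l with
    | nil => intro u _; simp
    | cons e t ih =>
      intro u hwalk
      obtain ⟨he, -, ht⟩ := hwalk
      simp only [List.map_cons, List.sum_cons, ih e.2 ht, hw e he]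
      push_cast
      ring
  rw [walkWeight, key l u h, ENNReal.ofReal_natCast]

lemma reachable_of_walk {G : WDigraph V} {u v : V} {l : List (V × V)}
    (h : IsWalkFrom G u v l) : G.Reachable u v := ⟨l, h⟩

open scoped Classical in
/-- minimal walk length (0 if unreachable) -/
noncomputable def mwl (G : WDigraph V) (u v : V) : ℕ :=
  if h : G.Reachable u v then
    Nat.find (⟨(Classical.choose h).length, Classical.choose h, Classical.choose_spec h, rfl⟩ :
      ∃ k, ∃ l, IsWalkFrom G u v l ∧ l.length = k)
  else 0

lemma mwl_spec {G : WDigraph V} {u v : V} (h : G.Reachable u v) :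
    ∃ l, IsWalkFrom G u v l ∧ l.length = mwl G u v := by
  classical
  rw [mwl, dif_pos h]
  convert Nat.find_spec (⟨(Classical.choose h).length, Classical.choose h,
    Classical.choose_spec h, rfl⟩ : ∃ k, ∃ l, IsWalkFrom G u v l ∧ l.length = k) using 2

lemma mwl_le {G : WDigraph V} {u v : V} {l : List (V × V)} (h : IsWalkFrom G u v l) :
    mwl G u v ≤ l.length := by
  classical
  rw [mwl, dif_pos (reachable_of_walk h)]
  exact Nat.find_min' _ ⟨l, h, rfl⟩

lemma walkWeight_unweighted {G : WDigraph V} (hU : G.Unweighted) (l : List (V × V)) :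
    walkWeight G l = (l.length : ℝ≥0∞) := by
  have : (l.map G.w).sum = (l.length : ℝ) := by
    induction l with
    | nil => simp
    | cons e t ih => simp [hU e, ih]; ring
  rw [walkWeight, this, ENNReal.ofReal_natCast]

lemma dist_eq_mwl {G : WDigraph V} (hU : G.Unweighted) {u v : V} (h : G.Reachable u v) :
    G.dist u v = (mwl G u v : ℝ≥0∞) := by
  apply le_antisymm
  · obtain ⟨l, hl, hlen⟩ := mwl_spec h
    calc G.dist u v ≤ walkWeight G l := dist_le_walk hl
    _ = _ := by rw [walkWeight_unweighted hU, hlen]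
  · apply le_dist
    intro l hl
    rw [walkWeight_unweighted hU]
    exact_mod_cast Nat.cast_le.mpr (mwl_le hl)

lemma dist_eq_top {G : WDigraph V} {u v : V} (h : ¬ G.Reachable u v) :
    G.dist u v = ⊤ := by
  rw [WDigraph.dist]
  have hset : {l : List (V × V) | IsWalkFrom G u v l} = ∅ := by
    ext l
    simp only [Set.mem_setOf_eq, Set.mem_empty_iff_false, iff_false]
    exact fun hl => h ⟨l, hl⟩
  rw [hset]
  simp

end S17
namespace S17
open Hopsets

/-- Grid width. -/
def Wd (L s : ℕ) : ℕ := 2*L*s + 2*s + 1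
/-- Grid height. -/
def Hd (L s : ℕ) : ℕ := 5*L*s^2
/-- Number of grid vertices. -/
def NB (L s : ℕ) : ℕ := Wd L s * Hd L s

/-- Direction vector of slope `i`. -/
def vec (i : ℕ) : ℤ × ℤ := ((i : ℤ), (i : ℤ)^2)

/-- Decode a vertex into grid coordinates. -/
def dec (L s : ℕ) {n : ℕ} (u : Fin n) : ℤ × ℤ :=
  ((((u : ℕ) % Wd L s : ℕ) : ℤ), (((u : ℕ) / Wd L s : ℕ) : ℤ))

/-- The potential in direction `j`. -/
def phi (j : ℕ) (z : ℤ × ℤ) : ℤ := 2*(j:ℤ)*z.1 - z.2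

/-- Point at parameter `t` on the line through `A` with direction `vec j`. -/
def lpt (A : ℤ × ℤ) (t j : ℕ) : ℤ × ℤ := (A.1 + (t:ℤ)*(j:ℤ), A.2 + (t:ℤ)*(j:ℤ)^2)

lemma lpt_zero (A : ℤ × ℤ) (j : ℕ) : lpt A 0 j = A := by simp [lpt]

lemma phi_lpt (A : ℤ × ℤ) (t j : ℕ) : phi j (lpt A t j) = phi j A + (t:ℤ)*(j:ℤ)^2 := by
  simp [phi, lpt]; ring

/-- Edge condition. -/
def cond (L s : ℕ) {n : ℕ} (p : Fin n × Fin n) : Prop :=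
  ∃ i : ℕ, s+1 ≤ i ∧ i ≤ 2*s ∧
    (dec L s p.2 = dec L s p.1 + vec i ∨ dec L s p.1 = dec L s p.2 + vec i)

open scoped Classical in
noncomputable def Eset (n L s : ℕ) : Finset (Fin n × Fin n) :=
  Finset.univ.filter (cond L s)

noncomputable def Gr (n L s : ℕ) : WDigraph (Fin n) := ⟨Eset n L s, fun _ => 1⟩

lemma mem_Eset {n L s : ℕ} {p : Fin n × Fin n} : p ∈ Eset n L s ↔ cond L s p := by
  classical
  simp [Eset]

lemma Gr_symm (n L s : ℕ) : (Gr n L s).Symmetric := by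
  intro e he
  refine ⟨?_, rfl⟩
  rw [show (Gr n L s).edges = Eset n L s from rfl, mem_Eset] at he ⊢
  obtain ⟨i, h1, h2, h3⟩ := he
  exact ⟨i, h1, h2, h3.symm⟩

lemma Gr_unweighted (n L s : ℕ) : (Gr n L s).Unweighted := fun _ => rfl

section PhiBounds

variable {s i j : ℕ} (hi1 : s+1 ≤ i) (hi2 : i ≤ 2*s) (hj1 : s+1 ≤ j) (hj2 : j ≤ 2*s)

include hi1 hi2 hj1 hj2

lemma phi_vec_le : phi j (vec i) ≤ (j:ℤ)^2 := by
  have h1 : ((s:ℤ)+1) ≤ (i:ℤ) := by exact_mod_cast hi1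
  have h2 : (i:ℤ) ≤ 2*(s:ℤ) := by exact_mod_cast hi2
  have h3 : ((s:ℤ)+1) ≤ (j:ℤ) := by exact_mod_cast hj1
  have h4 : (j:ℤ) ≤ 2*(s:ℤ) := by exact_mod_cast hj2
  simp only [phi, vec]
  nlinarith [sq_nonneg ((i:ℤ) - (j:ℤ))]

lemma phi_vec_lower : -((j:ℤ)^2) < phi j (vec i) := by
  have h1 : ((s:ℤ)+1) ≤ (i:ℤ) := by exact_mod_cast hi1
  have h2 : (i:ℤ) ≤ 2*(s:ℤ) := by exact_mod_cast hi2
  have h3 : ((s:ℤ)+1) ≤ (j:ℤ) := by exact_mod_cast hj1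
  have h4 : (j:ℤ) ≤ 2*(s:ℤ) := by exact_mod_cast hj2
  have h5 : (0:ℤ) ≤ s := by positivity
  simp only [phi, vec]
  nlinarith [sq_nonneg ((i:ℤ) - (j:ℤ)), sq_nonneg ((i:ℤ) + (j:ℤ) - 2*(s:ℤ) - 2)]

end PhiBounds

lemma phi_vec_eq {i j : ℕ} (h : phi j (vec i) = (j:ℤ)^2) : i = j := by
  have h3 : ((i:ℤ) - (j:ℤ))^2 = 0 := by simp only [phi, vec] at h; ring_nf; ring_nf at h; nlinarith
  have : (i:ℤ) = (j:ℤ) := by nlinarith [sq_nonneg ((i:ℤ) - (j:ℤ))]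
  exact_mod_cast this

lemma phi_add (j : ℕ) (z w : ℤ × ℤ) : phi j (z + w) = phi j z + phi j w := by
  simp [phi, Prod.fst_add, Prod.snd_add]; ring

lemma edge_phi_le {n L s : ℕ} {e : Fin n × Fin n} (he : e ∈ Eset n L s)
    {j : ℕ} (hj1 : s+1 ≤ j) (hj2 : j ≤ 2*s) :
    phi j (dec L s e.2) - phi j (dec L s e.1) ≤ (j:ℤ)^2 := by
  obtain ⟨i, h1, h2, h3 | h3⟩ := mem_Eset.mp he
  · rw [h3, phi_add]
    have := phi_vec_le h1 h2 hj1 hj2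
    linarith
  · rw [h3, phi_add]
    have := phi_vec_lower h1 h2 hj1 hj2
    have hj0 : (0:ℤ) ≤ (j:ℤ)^2 := sq_nonneg _
    linarith

lemma edge_phi_eq {n L s : ℕ} {e : Fin n × Fin n} (he : e ∈ Eset n L s)
    {j : ℕ} (hj1 : s+1 ≤ j) (hj2 : j ≤ 2*s)
    (heq : phi j (dec L s e.2) - phi j (dec L s e.1) = (j:ℤ)^2) :
    dec L s e.2 = dec L s e.1 + vec j := by
  obtain ⟨i, h1, h2, h3 | h3⟩ := mem_Eset.mp he
  · rw [h3, phi_add] at heq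
    have : phi j (vec i) = (j:ℤ)^2 := by linarith
    rw [phi_vec_eq this] at h3
    exact h3
  · exfalso
    rw [h3, phi_add] at heq
    have := phi_vec_lower h1 h2 hj1 hj2
    linarith

lemma walk_lower_G {n L s : ℕ} {j : ℕ} (hj1 : s+1 ≤ j) (hj2 : j ≤ 2*s) :
    ∀ (l : List (Fin n × Fin n)) (u v : Fin n), IsWalkFrom (Gr n L s) u v l →
      phi j (dec L s v) - phi j (dec L s u) ≤ (j:ℤ)^2 * l.length := by
  intro l
  induction l with
  | nil =>
    intro u v h
    rw [isWalkFrom_nil] at h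
    subst h; simp
  | cons e t ih =>
    intro u v h
    obtain ⟨he, h1, ht⟩ := h
    have hedge := edge_phi_le (n := n) he hj1 hj2
    have htail := ih e.2 v ht
    rw [h1] at hedge
    simp only [List.length_cons]
    push_cast
    linarith

lemma walk_eq_G {n L s : ℕ} {j : ℕ} (hj1 : s+1 ≤ j) (hj2 : j ≤ 2*s) :
    ∀ (l : List (Fin n × Fin n)) (u v : Fin n), IsWalkFrom (Gr n L s) u v l →
      phi j (dec L s v) - phi j (dec L s u) = (j:ℤ)^2 * l.length →
      dec L s v = dec L s u + (l.length : ℤ) • vec j := by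
  intro l
  induction l with
  | nil =>
    intro u v h _
    rw [isWalkFrom_nil] at h
    subst h; simp
  | cons e t ih =>
    intro u v h heq
    obtain ⟨he, h1, ht⟩ := h
    have hedge := edge_phi_le (n := n) he hj1 hj2
    have htail := walk_lower_G hj1 hj2 t e.2 v ht
    rw [h1] at hedge
    simp only [List.length_cons] at heq
    push_cast at heq
    have hedge_eq : phi j (dec L s e.2) - phi j (dec L s e.1) = (j:ℤ)^2 := by
      rw [h1]; linarith
    have htail_eq : phi j (dec L s v) - phi j (dec L s e.2) = (j:ℤ)^2 * t.length := by linarith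
    have hstep := edge_phi_eq he hj1 hj2 hedge_eq
    have := ih e.2 v ht htail_eq
    rw [this, hstep, h1]
    simp only [List.length_cons]
    push_cast
    rw [add_assoc, add_smul, one_smul]
    ring_nf

end S17
namespace S17
open Hopsets

lemma Wd_pos (L s : ℕ) : 0 < Wd L s := by simp only [Wd]; omega

lemma vtx_lt {n L s x y : ℕ} (hx : x < Wd L s) (hy : y < Hd L s) (hn : NB L s ≤ n) :
    x + Wd L s * y < n := by
  have : x + Wd L s * y < Wd L s * Hd L s := by
    calc x + Wd L s * y < Wd L s + Wd L s * y := by omega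
    _ = Wd L s * (y + 1) := by ring
    _ ≤ Wd L s * Hd L s := Nat.mul_le_mul_left _ (by omega)
  calc x + Wd L s * y < Wd L s * Hd L s := this
  _ = NB L s := rfl
  _ ≤ n := hn

lemma dec_eq {n L s x y : ℕ} {w : Fin n} (hw : (w : ℕ) = x + Wd L s * y)
    (hx : x < Wd L s) : dec L s w = ((x : ℤ), (y : ℤ)) := by
  have h1 : (w : ℕ) % Wd L s = x := by
    rw [hw, Nat.add_mul_mod_self_left, Nat.mod_eq_of_lt hx]
  have h2 : (w : ℕ) / Wd L s = y := by
    rw [hw, Nat.add_mul_div_left _ _ (Wd_pos L s), Nat.div_eq_of_lt hx, Nat.zero_add]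
  simp [dec, h1, h2]

lemma straight_walk {n L s j : ℕ} (hj1 : s+1 ≤ j) (hj2 : j ≤ 2*s) (hn : NB L s ≤ n) :
    ∀ (m x y : ℕ), x + m*j < Wd L s → y + m*j^2 < Hd L s →
    ∀ (u v : Fin n), (u:ℕ) = x + Wd L s * y →
      (v:ℕ) = (x + m*j) + Wd L s * (y + m*j^2) →
      ∃ l, IsWalkFrom (Gr n L s) u v l ∧ l.length = m := by
  intro m
  induction m with
  | zero =>
    intro x y hx hy u v hu hv
    refine ⟨[], ?_, rfl⟩
    rw [isWalkFrom_nil]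
    apply Fin.ext
    simp only [Nat.zero_mul, Nat.add_zero] at hv
    rw [hu, hv]
  | succ m ih =>
    intro x y hx hy u v hu hv
    have hxj : x + j < Wd L s := by nlinarith
    have hyj : y + j^2 < Hd L s := by nlinarith
    have hx' : x < Wd L s := by nlinarith
    have hy' : y < Hd L s := by nlinarith
    set u' : Fin n := ⟨(x+j) + Wd L s * (y+j^2), vtx_lt hxj hyj hn⟩ with hu'def
    have hu' : (u' : ℕ) = (x+j) + Wd L s * (y+j^2) := rfl
    have hedge : (u, u') ∈ Eset n L s := by
      rw [mem_Eset]
      refine ⟨j, hj1, hj2, Or.inl ?_⟩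
      rw [dec_eq hu hx', dec_eq hu' hxj]
      simp only [vec, Prod.mk_add_mk, Prod.mk.injEq]
      refine ⟨by push_cast; ring, by push_cast; ring⟩
    have hx2 : (x + j) + m*j < Wd L s := by nlinarith
    have hy2 : (y + j^2) + m*j^2 < Hd L s := by nlinarith
    have hv2 : (v:ℕ) = ((x+j) + m*j) + Wd L s * ((y+j^2) + m*j^2) := by
      rw [hv]; ring_nf
    obtain ⟨l, hl, hlen⟩ := ih (x+j) (y+j^2) hx2 hy2 u' v hu' hv2
    exact ⟨(u, u') :: l, ⟨hedge, rfl, hl⟩, by simp [hlen]⟩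

/-- hypotheses bundle for a critical pair -/
lemma crit_coords {L s j a₁ a₂ : ℕ} (hs : 1 ≤ s) (hL : 1 ≤ L)
    (hj1 : s+1 ≤ j) (hj2 : j ≤ 2*s) (ha₁ : a₁ ≤ s) (ha₂ : a₂ < L*s^2) :
    a₁ + L*j < Wd L s ∧ a₂ + L*j^2 < Hd L s := by
  have hj2' : j^2 ≤ (2*s)^2 := Nat.pow_le_pow_left hj2 2
  constructor
  · simp only [Wd]; nlinarith
  · simp only [Hd]; nlinarith

lemma dist_crit {n L s j a₁ a₂ : ℕ} (hs : 1 ≤ s) (hL : 1 ≤ L) (hn : NB L s ≤ n)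
    (hj1 : s+1 ≤ j) (hj2 : j ≤ 2*s) (ha₁ : a₁ ≤ s) (ha₂ : a₂ < L*s^2)
    {u b : Fin n} (hu : (u:ℕ) = a₁ + Wd L s * a₂)
    (hb : (b:ℕ) = (a₁ + L*j) + Wd L s * (a₂ + L*j^2)) :
    (Gr n L s).dist u b = (L : ℝ≥0∞) := by
  obtain ⟨hcx, hcy⟩ := crit_coords hs hL hj1 hj2 ha₁ ha₂
  have ha₁W : a₁ < Wd L s := by omega
  have ha₂H : a₂ < Hd L s := by
    simp only [Hd]; nlinarith
  have hdecu : dec L s u = ((a₁ : ℤ), (a₂ : ℤ)) := dec_eq hu ha₁W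
  have hdecb : dec L s b = (((a₁ + L*j : ℕ) : ℤ), ((a₂ + L*j^2 : ℕ) : ℤ)) := dec_eq hb hcx
  have hphi : phi j (dec L s b) - phi j (dec L s u) = (j:ℤ)^2 * (L:ℤ) := by
    rw [hdecu, hdecb]
    simp only [phi]
    push_cast
    ring
  apply le_antisymm
  · obtain ⟨l, hl, hlen⟩ := straight_walk hj1 hj2 hn L a₁ a₂ hcx hcy u b hu hb
    calc (Gr n L s).dist u b ≤ walkWeight (Gr n L s) l := dist_le_walk hl
    _ = (L : ℝ≥0∞) := by rw [walkWeight_unweighted (Gr_unweighted n L s), hlen]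
  · apply le_dist
    intro l hl
    rw [walkWeight_unweighted (Gr_unweighted n L s)]
    have hlow := walk_lower_G hj1 hj2 l u b hl
    rw [hphi] at hlow
    have hj0 : (0:ℤ) < (j:ℤ)^2 := by
      have : 0 < j := by omega
      positivity
    have : (L : ℤ) ≤ (l.length : ℤ) := by nlinarith
    exact_mod_cast Nat.cast_le.mpr (by exact_mod_cast this)

end S17
namespace S17
open Hopsets

variable {n L s : ℕ} {H : Finset (Fin n × Fin n)}

/-- natural-valued weight of edges in the augmented graph -/
noncomputable def nw (n L s : ℕ) (H : Finset (Fin n × Fin n)) (e : Fin n × Fin n) : ℕ :=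
  if e ∈ H then mwl (Gr n L s) e.1 e.2 else 1

lemma augment_edges : ((Gr n L s).augment H).edges = Eset n L s ∪ H := rfl

lemma augment_w_eq (Hok : ∀ e ∈ H, (Gr n L s).Reachable e.1 e.2) :
    ∀ e ∈ ((Gr n L s).augment H).edges, ((Gr n L s).augment H).w e = (nw n L s H e : ℝ) := by
  intro e _
  by_cases he : e ∈ H
  · have hr := Hok e he
    show (if e ∈ H then ((Gr n L s).dist e.1 e.2).toReal else (Gr n L s).w e) = _
    rw [if_pos he, nw, if_pos he, dist_eq_mwl (Gr_unweighted n L s) hr]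
    simp
  · show (if e ∈ H then ((Gr n L s).dist e.1 e.2).toReal else (Gr n L s).w e) = _
    rw [if_neg he, nw, if_neg he]
    simp [Gr]

lemma augment_walkWeight (Hok : ∀ e ∈ H, (Gr n L s).Reachable e.1 e.2)
    {u v : Fin n} {l : List (Fin n × Fin n)} (h : IsWalkFrom ((Gr n L s).augment H) u v l) :
    walkWeight ((Gr n L s).augment H) l = (((l.map (nw n L s H)).sum : ℕ) : ℝ≥0∞) :=
  walkWeight_eq_natSum _ h (augment_w_eq Hok)

lemma edge_lower_aug (Hok : ∀ e ∈ H, (Gr n L s).Reachable e.1 e.2)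
    {j : ℕ} (hj1 : s+1 ≤ j) (hj2 : j ≤ 2*s)
    {e : Fin n × Fin n} (he : e ∈ ((Gr n L s).augment H).edges) :
    phi j (dec L s e.2) - phi j (dec L s e.1) ≤ (j:ℤ)^2 * (nw n L s H e : ℤ) := by
  by_cases heH : e ∈ H
  · rw [nw, if_pos heH]
    obtain ⟨lm, hlm, hlen⟩ := mwl_spec (Hok e heH)
    have := walk_lower_G hj1 hj2 lm e.1 e.2 hlm
    rwa [hlen] at this
  · rw [nw, if_neg heH]
    rw [augment_edges, Finset.mem_union] at he
    rcases he with he | he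
    · have := edge_phi_le he hj1 hj2
      push_cast
      linarith
    · exact absurd he heH

lemma walk_lower_aug (Hok : ∀ e ∈ H, (Gr n L s).Reachable e.1 e.2)
    {j : ℕ} (hj1 : s+1 ≤ j) (hj2 : j ≤ 2*s) :
    ∀ (l : List (Fin n × Fin n)) (u v : Fin n), IsWalkFrom ((Gr n L s).augment H) u v l →
      phi j (dec L s v) - phi j (dec L s u) ≤ (j:ℤ)^2 * ((l.map (nw n L s H)).sum : ℤ) := by
  intro l
  induction l with
  | nil =>
    intro u v h
    rw [isWalkFrom_nil] at h
    subst h; simp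
  | cons e t ih =>
    intro u v h
    obtain ⟨he, h1, ht⟩ := h
    have hedge := edge_lower_aug Hok hj1 hj2 he
    have htail := ih e.2 v ht
    rw [h1] at hedge
    simp only [List.map_cons, List.sum_cons]
    rw [Nat.cast_add, mul_add]
    linarith

lemma lpt_add_smul (A : ℤ × ℤ) (t g j : ℕ) :
    lpt A t j + (g:ℤ) • vec j = lpt A (t+g) j := by
  simp only [lpt, vec, Prod.smul_mk, smul_eq_mul, Prod.mk_add_mk, Prod.mk.injEq]
  refine ⟨by push_cast; ring, by push_cast; ring⟩

lemma lpt_add_vec (A : ℤ × ℤ) (t j : ℕ) :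
    lpt A t j + vec j = lpt A (t+1) j := by
  have := lpt_add_smul A t 1 j
  simpa using this

lemma main_jump (Hok : ∀ e ∈ H, (Gr n L s).Reachable e.1 e.2)
    {j : ℕ} (hj1 : s+1 ≤ j) (hj2 : j ≤ 2*s)
    {b : Fin n} {A : ℤ × ℤ} (hb : dec L s b = lpt A L j) :
    ∀ (l : List (Fin n × Fin n)) (x : Fin n) (t : ℕ),
      IsWalkFrom ((Gr n L s).augment H) x b l → dec L s x = lpt A t j → t ≤ L →
      (l.map (nw n L s H)).sum + t = L → l.length + t < L →
      ∃ e ∈ l, e ∈ H ∧ ∃ t₁ t₂ : ℕ, dec L s e.1 = lpt A t₁ j ∧ dec L s e.2 = lpt A t₂ j ∧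
        t₁ + 2 ≤ t₂ ∧ t₂ ≤ L := by
  intro l
  induction l with
  | nil =>
    intro x t _ _ _ hsum hlen
    simp only [List.map_nil, List.sum_nil, Nat.zero_add] at hsum
    simp only [List.length_nil, Nat.zero_add] at hlen
    omega
  | cons e l' ih =>
    intro x t hwalk hx htL hsum hlen
    obtain ⟨he, h1, ht⟩ := hwalk
    have hj2sq : (0:ℤ) < (j:ℤ)^2 := by
      have : 0 < j := by omega
      positivity
    set g : ℕ := nw n L s H e with hg
    set W' : ℕ := (l'.map (nw n L s H)).sum with hW'
    have hsum' : g + W' + t = L := by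
      simp only [List.map_cons, List.sum_cons] at hsum
      omega
    have hedge := edge_lower_aug Hok hj1 hj2 he
    have htail := walk_lower_aug Hok hj1 hj2 l' e.2 b ht
    rw [h1] at hedge
    have hphix : phi j (dec L s x) = phi j A + (t:ℤ)*(j:ℤ)^2 := by rw [hx, phi_lpt]
    have hphib : phi j (dec L s b) = phi j A + (L:ℤ)*(j:ℤ)^2 := by rw [hb, phi_lpt]
    have hLt : phi j (dec L s b) - phi j (dec L s x) = ((L:ℤ) - t) * (j:ℤ)^2 := by
      rw [hphix, hphib]; ring
    have hgW : ((L:ℤ) - t) = (g:ℤ) + W' := by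
      have := hsum'
      push_cast [← this]
      ring
    have hedge' : phi j (dec L s e.2) - phi j (dec L s x) ≤ (j:ℤ)^2 * (g:ℤ) := hedge
    have htail' : phi j (dec L s b) - phi j (dec L s e.2) ≤ (j:ℤ)^2 * (W':ℤ) := htail
    have hprod : ((L:ℤ) - t) * (j:ℤ)^2 = (j:ℤ)^2 * (g:ℤ) + (j:ℤ)^2 * (W':ℤ) := by
      rw [hgW]; ring
    have hedge_eq : phi j (dec L s e.2) - phi j (dec L s x) = (j:ℤ)^2 * (g:ℤ) := by
      linarith
    have htail_eq : phi j (dec L s b) - phi j (dec L s e.2) = (j:ℤ)^2 * (W':ℤ) := by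
      linarith
    -- establish dec e.2 = lpt A (t+g) j
    have hdece2 : dec L s e.2 = lpt A (t + g) j := by
      by_cases heH : e ∈ H
      · obtain ⟨lm, hlm, hlen'⟩ := mwl_spec (Hok e heH)
        have hgval : g = mwl (Gr n L s) e.1 e.2 := by rw [hg, nw, if_pos heH]
        have : phi j (dec L s e.2) - phi j (dec L s e.1) = (j:ℤ)^2 * (lm.length : ℤ) := by
          rw [h1, hedge_eq, hgval, hlen']
        have hstep := walk_eq_G hj1 hj2 lm e.1 e.2 hlm this
        rw [h1, hx] at hstep
        rw [hstep, hlen', ← hgval, lpt_add_smul]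
      · have hg1 : g = 1 := by rw [hg, nw, if_neg heH]
        rw [augment_edges, Finset.mem_union] at he
        rcases he with heE | heE
        · have : phi j (dec L s e.2) - phi j (dec L s e.1) = (j:ℤ)^2 := by
            rw [h1, hedge_eq, hg1]; push_cast; ring
          have hstep := edge_phi_eq heE hj1 hj2 this
          rw [h1, hx] at hstep
          rw [hstep, lpt_add_vec, hg1]
        · exact absurd heE heH
    have htg : t + g ≤ L := by
      have h2 : ((L:ℤ) - ((t:ℤ)+(g:ℤ))) * (j:ℤ)^2 = (j:ℤ)^2 * (W':ℤ) := by
        rw [← htail_eq, hphib, hdece2, phi_lpt]; push_cast; ring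
      have hW'0 : (0:ℤ) ≤ (W':ℤ) := Int.natCast_nonneg _
      have hne : ((j:ℤ)^2) ≠ 0 := ne_of_gt hj2sq
      have hD : ((L:ℤ) - ((t:ℤ)+(g:ℤ))) = (W':ℤ) :=
        mul_right_cancel₀ hne (by linarith : ((L:ℤ)-((t:ℤ)+(g:ℤ))) * (j:ℤ)^2 = (W':ℤ) * (j:ℤ)^2)
      have : ((t:ℤ) + (g:ℤ)) ≤ (L:ℤ) := by linarith
      exact_mod_cast this
    by_cases hgbig : 2 ≤ g
    · refine ⟨e, List.mem_cons_self, ?_, t, t + g, by rw [h1, hx], hdece2, by omega, htg⟩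
      by_contra heH
      have : g = 1 := by rw [hg, nw, if_neg heH]
      omega
    · have hg1 : g ≤ 1 := by omega
      have hrec := ih e.2 (t + g) ht hdece2 htg (by omega) (by
        simp only [List.length_cons] at hlen
        omega)
      obtain ⟨e', he'mem, he'H, t₁, t₂, hd1, hd2, hsep, ht₂⟩ := hrec
      exact ⟨e', List.mem_cons_of_mem e he'mem, he'H, t₁, t₂, hd1, hd2, hsep, ht₂⟩

end S17
namespace S17
open Hopsets

variable {n L s : ℕ}

lemma beta_pos (hs : 1 ≤ s) (hL : 1 ≤ L) (hn : NB L s ≤ n)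
    {β : ℕ} {H : Finset (Fin n × Fin n)}
    (hEq : ∀ u v, ((Gr n L s).augment H).hopDist β u v = (Gr n L s).dist u v) :
    1 ≤ β := by
  by_contra hβ
  push_neg at hβ
  interval_cases β
  have hx : (s+1) < Wd L s := by simp only [Wd]; nlinarith
  have hy : (s+1)^2 < Hd L s := by simp only [Hd]; nlinarith
  have h0w : 0 < Wd L s := Wd_pos L s
  have h0h : 0 < Hd L s := by simp only [Hd]; positivity
  have h0n : 0 < n := by
    have : 0 < NB L s := Nat.mul_pos h0w h0h
    omega
  set u₀ : Fin n := ⟨0, h0n⟩ with hu₀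
  set w₀ : Fin n := ⟨(s+1) + Wd L s * (s+1)^2, vtx_lt hx hy hn⟩ with hw₀
  have hneq : u₀ ≠ w₀ := by
    intro h
    have := congrArg (Fin.val) h
    simp only [hu₀, hw₀] at this
    omega
  have hdecu : dec L s u₀ = ((0:ℤ), (0:ℤ)) := by
    have : (u₀ : ℕ) = 0 + Wd L s * 0 := by simp [hu₀]
    have := dec_eq this h0w
    simpa using this
  have hdecw : dec L s w₀ = (((s+1:ℕ):ℤ), (((s+1)^2:ℕ):ℤ)) := dec_eq rfl hx
  have hedge : (u₀, w₀) ∈ Eset n L s := by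
    rw [mem_Eset]
    refine ⟨s+1, le_refl _, by omega, Or.inl ?_⟩
    rw [hdecu, hdecw]
    simp only [vec, Prod.mk_add_mk, Prod.mk.injEq]
    constructor <;> push_cast <;> ring
  -- dist ≤ 1
  have hwalk : IsWalkFrom (Gr n L s) u₀ w₀ [(u₀, w₀)] := ⟨hedge, rfl, rfl⟩
  have hd1 : (Gr n L s).dist u₀ w₀ ≤ 1 := by
    calc (Gr n L s).dist u₀ w₀ ≤ walkWeight (Gr n L s) [(u₀, w₀)] := dist_le_walk hwalk
    _ = ((1:ℕ) : ℝ≥0∞) := by rw [walkWeight_unweighted (Gr_unweighted n L s)]; rfl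
    _ = 1 := by norm_num
  -- hopDist 0 = ⊤
  have hhop : ((Gr n L s).augment H).hopDist 0 u₀ w₀ = ⊤ := by
    rw [WDigraph.hopDist]
    have hset : {l : List (Fin n × Fin n) |
        IsWalkFrom ((Gr n L s).augment H) u₀ w₀ l ∧ l.length ≤ 0} = ∅ := by
      ext l
      simp only [Set.mem_setOf_eq, Set.mem_empty_iff_false, iff_false, not_and]
      intro hl hlen
      have : l = [] := List.length_eq_zero_iff.mp (Nat.le_zero.mp hlen)
      subst this
      exact hneq hl
    rw [hset]
    simp
  rw [hEq u₀ w₀] at hhop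
  rw [hhop] at hd1
  exact absurd hd1 (by simp)

lemma Hok_of (hs : 1 ≤ s) (hL : 1 ≤ L) (hn : NB L s ≤ n)
    {β : ℕ} {H : Finset (Fin n × Fin n)}
    (hEq : ∀ u v, ((Gr n L s).augment H).hopDist β u v = (Gr n L s).dist u v) :
    ∀ e ∈ H, (Gr n L s).Reachable e.1 e.2 := by
  intro e he
  by_contra hr
  have hβ1 : 1 ≤ β := beta_pos hs hL hn hEq
  have hwalk : IsWalkFrom ((Gr n L s).augment H) e.1 e.2 [e] := by
    refine ⟨?_, rfl, rfl⟩
    rw [augment_edges, Finset.mem_union]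
    exact Or.inr he
  have hw0 : ((Gr n L s).augment H).w e = 0 := by
    show (if e ∈ H then ((Gr n L s).dist e.1 e.2).toReal else (Gr n L s).w e) = 0
    rw [if_pos he, dist_eq_top hr]
    simp
  have hle : ((Gr n L s).augment H).hopDist β e.1 e.2 ≤ 0 := by
    calc ((Gr n L s).augment H).hopDist β e.1 e.2
        ≤ walkWeight ((Gr n L s).augment H) [e] := hopDist_le_walk hwalk (by simpa)
    _ = 0 := by
        rw [walkWeight]
        simp [hw0]
  rw [hEq e.1 e.2, dist_eq_top hr] at hle
  simp at hle

/-- the "good" property of a hopset edge for a critical pair -/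
def Good (L s : ℕ) {n : ℕ} (H : Finset (Fin n × Fin n)) (q : ℕ × ℕ × ℕ)
    (e : Fin n × Fin n) : Prop :=
  e ∈ H ∧ ∃ t₁ t₂ : ℕ, dec L s e.1 = lpt ((q.2.1 : ℤ), (q.2.2 : ℤ)) t₁ q.1 ∧
    dec L s e.2 = lpt ((q.2.1 : ℤ), (q.2.2 : ℤ)) t₂ q.1 ∧ t₁ + 2 ≤ t₂ ∧ t₂ ≤ L

lemma exists_good (hs : 1 ≤ s) (hL : 1 ≤ L) (hn : NB L s ≤ n)
    {β : ℕ} {H : Finset (Fin n × Fin n)}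
    (hEq : ∀ u v, ((Gr n L s).augment H).hopDist β u v = (Gr n L s).dist u v)
    (hβ : β < L) {j a₁ a₂ : ℕ} (hj1 : s+1 ≤ j) (hj2 : j ≤ 2*s)
    (ha₁ : a₁ ≤ s) (ha₂ : a₂ < L*s^2) :
    ∃ e, Good L s H (j, a₁, a₂) e := by
  have Hok := Hok_of hs hL hn hEq
  obtain ⟨hcx, hcy⟩ := crit_coords hs hL hj1 hj2 ha₁ ha₂
  have ha₁W : a₁ < Wd L s := by omega
  have ha₂H : a₂ < Hd L s := by simp only [Hd]; nlinarith
  set u : Fin n := ⟨a₁ + Wd L s * a₂, vtx_lt ha₁W ha₂H hn⟩ with hu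
  set b : Fin n := ⟨(a₁ + L*j) + Wd L s * (a₂ + L*j^2), vtx_lt hcx hcy hn⟩ with hb
  have hdist : (Gr n L s).dist u b = (L : ℝ≥0∞) := dist_crit hs hL hn hj1 hj2 ha₁ ha₂ rfl rfl
  have hhop : ((Gr n L s).augment H).hopDist β u b = (L : ℝ≥0∞) := by
    rw [hEq u b, hdist]
  have hlt : ((Gr n L s).augment H).hopDist β u b < ((L+1 : ℕ) : ℝ≥0∞) := by
    rw [hhop]
    exact_mod_cast Nat.lt_succ_self L
  obtain ⟨l, hlwalk, hllen, hlw⟩ := exists_walk_of_hopDist_lt hlt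
  rw [augment_walkWeight Hok hlwalk] at hlw
  set W : ℕ := (l.map (nw n L s H)).sum with hW
  have hWlt : W < L + 1 := by exact_mod_cast hlw
  set A : ℤ × ℤ := ((a₁ : ℤ), (a₂ : ℤ)) with hA
  have hdecu : dec L s u = lpt A 0 j := by
    rw [lpt_zero, hA]
    exact dec_eq rfl ha₁W
  have hdecb : dec L s b = lpt A L j := by
    have h := dec_eq (x := a₁ + L*j) (y := a₂ + L*j^2) (w := b) rfl hcx
    rw [h, hA]
    simp only [lpt, Prod.mk.injEq]
    constructor <;> push_cast <;> ring
  -- lower bound on W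
  have hj2sq : (0:ℤ) < (j:ℤ)^2 := by
    have : 0 < j := by omega
    positivity
  have hWge : L ≤ W := by
    have hlow := walk_lower_aug Hok hj1 hj2 l u b hlwalk
    have hphi : phi j (dec L s b) - phi j (dec L s u) = (L:ℤ) * (j:ℤ)^2 := by
      rw [hdecu, hdecb, phi_lpt, phi_lpt]
      push_cast; ring
    rw [hphi] at hlow
    have : (L:ℤ) ≤ (W:ℤ) := by nlinarith
    exact_mod_cast this
  have hWL : W + 0 = L := by omega
  have hlen0 : l.length + 0 < L := by
    have := hllen
    omega
  obtain ⟨e, _, heH, t₁, t₂, hd1, hd2, hsep, ht2⟩ :=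
    main_jump Hok hj1 hj2 hdecb l u 0 hlwalk hdecu (Nat.zero_le L) hWL hlen0
  exact ⟨e, heH, t₁, t₂, hd1, hd2, hsep, ht2⟩

lemma inj_core {s j j' t₁ t₂ t₁' t₂' a₁ a₂ a₁' a₂' : ℕ}
    (hj1 : s+1 ≤ j) (hj1' : s+1 ≤ j') (ha₁ : a₁ ≤ s) (ha₁' : a₁' ≤ s)
    (hsep : t₁ + 2 ≤ t₂) (hsep' : t₁' + 2 ≤ t₂')
    (e1 : lpt ((a₁:ℤ), (a₂:ℤ)) t₁ j = lpt ((a₁':ℤ), (a₂':ℤ)) t₁' j')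
    (e2 : lpt ((a₁:ℤ), (a₂:ℤ)) t₂ j = lpt ((a₁':ℤ), (a₂':ℤ)) t₂' j') :
    j = j' ∧ a₁ = a₁' ∧ a₂ = a₂' := by
  simp only [lpt, Prod.mk.injEq] at e1 e2
  obtain ⟨e11, e12⟩ := e1
  obtain ⟨e21, e22⟩ := e2
  set J : ℤ := (j : ℤ) with hJ
  set J' : ℤ := (j' : ℤ) with hJ'
  have hJpos : (0:ℤ) < J := by rw [hJ]; exact_mod_cast Nat.lt_of_lt_of_le (Nat.succ_pos s) hj1
  have hsJ : (s:ℤ) + 1 ≤ J := by rw [hJ]; exact_mod_cast hj1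
  have ha₁Z : (a₁:ℤ) ≤ (s:ℤ) := by exact_mod_cast ha₁
  have ha₁'Z : (a₁':ℤ) ≤ (s:ℤ) := by exact_mod_cast ha₁'
  have ha₁0 : (0:ℤ) ≤ (a₁:ℤ) := Int.natCast_nonneg _
  have ha₁'0 : (0:ℤ) ≤ (a₁':ℤ) := Int.natCast_nonneg _
  set d : ℤ := (t₂:ℤ) - t₁ with hd
  set d' : ℤ := (t₂':ℤ) - t₁' with hd'
  have hd2 : 2 ≤ d := by rw [hd]; omega
  have hd2' : 2 ≤ d' := by rw [hd']; omega
  have hdJ : d * J = d' * J' := by rw [hd, hd', hJ, hJ']; linear_combination e21 - e11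
  have hdJ2 : d * J^2 = d' * J'^2 := by rw [hd, hd', hJ, hJ']; linear_combination e22 - e12
  have hdJpos : 0 < d * J := mul_pos (by linarith) hJpos
  have hkey : (d*J)*J = (d*J)*J' := by
    calc (d*J)*J = d*J^2 := by ring
    _ = d'*J'^2 := hdJ2
    _ = (d'*J')*J' := by ring
    _ = (d*J)*J' := by rw [hdJ]
  have hJJ' : J = J' := mul_left_cancel₀ (ne_of_gt hdJpos) hkey
  have hjj' : j = j' := by
    rw [hJ, hJ'] at hJJ'
    exact_mod_cast hJJ'
  have hm : ((t₁':ℤ) - t₁) * J = (a₁:ℤ) - a₁' := by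
    rw [hJ]
    linear_combination -e11 + (t₁':ℤ) * hJJ'
  have ht₁eq : (t₁':ℤ) = (t₁:ℤ) := by
    rcases lt_trichotomy ((t₁':ℤ) - t₁) 0 with h | h | h
    · exfalso
      have h1 : ((t₁':ℤ) - t₁) ≤ -1 := by omega
      have h2 : ((t₁':ℤ) - t₁) * J ≤ (-1) * J := by
        apply mul_le_mul_of_nonneg_right h1 (le_of_lt hJpos)
      linarith
    · linarith
    · exfalso
      have h1 : (1:ℤ) ≤ (t₁':ℤ) - t₁ := by omega
      have h2 : (1:ℤ) * J ≤ ((t₁':ℤ) - t₁) * J := by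
        apply mul_le_mul_of_nonneg_right h1 (le_of_lt hJpos)
      linarith
  have ha₁eq : a₁ = a₁' := by
    have : (a₁:ℤ) = (a₁':ℤ) := by
      rw [ht₁eq] at hm
      simp at hm
      linarith
    exact_mod_cast this
  have ha₂eq : a₂ = a₂' := by
    have : (a₂:ℤ) = (a₂':ℤ) := by
      rw [← hJJ', ht₁eq] at e12
      linarith
    exact_mod_cast this
  exact ⟨hjj', ha₁eq, ha₂eq⟩

end S17
namespace S17
open Hopsets

lemma crit_lb {n L s : ℕ} (hs : 1 ≤ s) (hL : 1 ≤ L) (hn : NB L s ≤ n)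
    {β : ℕ} {H : Finset (Fin n × Fin n)}
    (hEq : ∀ u v, ((Gr n L s).augment H).hopDist β u v = (Gr n L s).dist u v)
    (hβ : β < L) :
    s * ((s+1) * (L*s^2)) ≤ H.card := by
  classical
  set T : Finset (ℕ × ℕ × ℕ) :=
    (Finset.Icc (s+1) (2*s)) ×ˢ ((Finset.range (s+1)) ×ˢ (Finset.range (L*s^2))) with hT
  have hcard : T.card = s * ((s+1) * (L*s^2)) := by
    rw [hT, Finset.card_product, Finset.card_product, Nat.card_Icc,
      Finset.card_range, Finset.card_range]
    congr 1
    omega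
  have hmem : ∀ q ∈ T, (s+1 ≤ q.1 ∧ q.1 ≤ 2*s) ∧ q.2.1 ≤ s ∧ q.2.2 < L*s^2 := by
    intro q hq
    rw [hT, Finset.mem_product, Finset.mem_product, Finset.mem_Icc,
      Finset.mem_range, Finset.mem_range] at hq
    exact ⟨hq.1, by omega, hq.2.2⟩
  have hex : ∀ q : ℕ × ℕ × ℕ, ∃ e, q ∈ T → Good L s H q e := by
    intro q
    by_cases hq : q ∈ T
    · obtain ⟨⟨h1, h2⟩, h3, h4⟩ := hmem q hq
      obtain ⟨e, he⟩ := exists_good hs hL hn hEq hβ h1 h2 h3 h4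
      exact ⟨e, fun _ => he⟩
    · have h0n : 0 < n := by
        have : 0 < NB L s := Nat.mul_pos (Wd_pos L s) (by simp only [Hd]; positivity)
        omega
      exact ⟨(⟨0, h0n⟩, ⟨0, h0n⟩), fun h => absurd h hq⟩
  choose f hf using hex
  rw [← hcard]
  apply Finset.card_le_card_of_injOn f
  · intro q hq
    exact ((hf q) hq).1
  · intro q1 hq1 q2 hq2 hfeq
    have hg1 := (hf q1) hq1
    have hg2 := (hf q2) hq2
    rw [hfeq] at hg1
    obtain ⟨⟨hj11, hj12⟩, ha11, ha12⟩ := hmem q1 hq1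
    obtain ⟨⟨hj21, hj22⟩, ha21, ha22⟩ := hmem q2 hq2
    obtain ⟨_, t₁, t₂, hd1, hd2, hsep, _⟩ := hg1
    obtain ⟨_, t₁', t₂', hd1', hd2', hsep', _⟩ := hg2
    have e1 : lpt ((q1.2.1:ℤ), (q1.2.2:ℤ)) t₁ q1.1 = lpt ((q2.2.1:ℤ), (q2.2.2:ℤ)) t₁' q2.1 := by
      rw [← hd1, ← hd1']
    have e2 : lpt ((q1.2.1:ℤ), (q1.2.2:ℤ)) t₂ q1.1 = lpt ((q2.2.1:ℤ), (q2.2.2:ℤ)) t₂' q2.1 := by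
      rw [← hd2, ← hd2']
    obtain ⟨hj, ha1, ha2⟩ := inj_core hj11 hj21 ha11 ha21 hsep hsep' e1 e2
    exact Prod.ext hj (Prod.ext ha1 ha2)

end S17
namespace S17
open Hopsets

lemma NB_le (K L : ℕ) (hK : 1 ≤ K) (hL : 1 ≤ L) : NB L (K*L) ≤ 25*K^3*L^5 := by
  have h1 : Wd L (K*L) ≤ 5*K*L^2 := by
    simp only [Wd]
    have hL2 : L ≤ L^2 := by nlinarith
    have hh1 : K*L ≤ K*(L^2) := Nat.mul_le_mul_left K hL2
    have hh2 : 1 ≤ K*L^2 := Nat.one_le_iff_ne_zero.mpr (by positivity)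
    nlinarith [hh1, hh2]
  have h2 : Hd L (K*L) = 5*(K^2*L^3) := by
    simp only [Hd]; ring
  calc NB L (K*L) = Wd L (K*L) * Hd L (K*L) := rfl
  _ ≤ (5*K*L^2) * (5*(K^2*L^3)) := Nat.mul_le_mul h1 (le_of_eq h2)
  _ = 25*K^3*L^5 := by ring

lemma count_ge (K L : ℕ) (hK : 1 ≤ K) (hL : 1 ≤ L) :
    K^4*L^5 ≤ (K*L) * (((K*L)+1) * (L*(K*L)^2)) := by
  nlinarith

lemma pow32 : ((32:ℝ)) ^ ((1:ℝ)/5) = 2 := by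
  have h : (32:ℝ) = (2:ℝ) ^ ((5:ℕ):ℝ) := by
    rw [Real.rpow_natCast]; norm_num
  rw [h, ← Real.rpow_mul (by norm_num : (0:ℝ) ≤ 2)]
  norm_num

end S17

open Hopsets S17 in
theorem stmt_17' (δ C : ℝ) (hδ : 0 < δ) (hC : 0 < C) :
    ∃ n0 : ℕ, ∀ n ≥ n0, ∃ G : WDigraph (Fin n), G.Symmetric ∧ G.Unweighted ∧
      ∀ (β : ℕ) (H : Finset (Fin n × Fin n)),
        (∀ u v, (G.augment H).hopDist β u v = G.dist u v) →
        (H.card : ℝ) ≤ C * (n : ℝ) →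
        (n : ℝ) ^ (1 / 5 - δ) ≤ (β : ℝ) := by
  set K : ℕ := 800 * (⌈C⌉₊ + 1) with hK
  set c : ℕ := 25 * K^3 with hc
  have hK1 : 1 ≤ K := by omega
  have hc1 : 1 ≤ c := by
    have : 1 ≤ K^3 := Nat.one_le_pow _ _ (by omega)
    omega
  refine ⟨⌈(2*(c:ℝ)^((1:ℝ)/5))^((1:ℝ)/δ)⌉₊ + 32*c + 2, ?_⟩
  intro n hn
  have hn32 : 32 * c ≤ n := by omega
  have hn1 : 1 ≤ n := by omega
  have hnR : (1:ℝ) ≤ (n:ℝ) := by exact_mod_cast hn1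
  have hcR : (0:ℝ) < (c:ℝ) := by exact_mod_cast hc1
  set x : ℝ := ((n:ℝ)/(c:ℝ)) ^ ((1:ℝ)/5) with hx
  have hx0 : 0 ≤ x := Real.rpow_nonneg (by positivity) _
  set L : ℕ := ⌊x⌋₊ with hLdef
  set s : ℕ := K * L with hsdef
  -- x ≥ 2
  have hx2 : (2:ℝ) ≤ x := by
    have h32 : (32:ℝ) ≤ (n:ℝ)/(c:ℝ) := by
      rw [le_div_iff₀ hcR]
      exact_mod_cast hn32
    calc (2:ℝ) = (32:ℝ) ^ ((1:ℝ)/5) := pow32.symm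
    _ ≤ x := Real.rpow_le_rpow (by norm_num) h32 (by norm_num)
  have hL1 : 1 ≤ L := by
    rw [hLdef]
    exact Nat.le_floor (by push_cast; linarith)
  have hL1R : (1:ℝ) ≤ (L:ℝ) := by exact_mod_cast hL1
  have hs1 : 1 ≤ s := by
    rw [hsdef]; exact Nat.one_le_iff_ne_zero.mpr (by positivity)
  -- c * L^5 ≤ n
  have hLx : (L:ℝ) ≤ x := Nat.floor_le hx0
  have hx5 : x ^ (5:ℕ) = (n:ℝ)/(c:ℝ) := by
    rw [hx, ← Real.rpow_natCast (((n:ℝ)/(c:ℝ)) ^ ((1:ℝ)/5)) 5,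
      ← Real.rpow_mul (by positivity)]
    norm_num
  have hcL5n : (c:ℝ) * (L:ℝ)^(5:ℕ) ≤ (n:ℝ) := by
    have : (L:ℝ)^(5:ℕ) ≤ x^(5:ℕ) := by
      apply pow_le_pow_left₀ (by positivity) hLx
    rw [hx5] at this
    calc (c:ℝ) * (L:ℝ)^(5:ℕ) ≤ (c:ℝ) * ((n:ℝ)/(c:ℝ)) := by
          apply mul_le_mul_of_nonneg_left this (le_of_lt hcR)
    _ = (n:ℝ) := by field_simp
  have hNn : NB L s ≤ n := by
    have h1 : NB L s ≤ c * L^5 := by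
      rw [hsdef, hc]
      have := NB_le K L hK1 hL1
      calc NB L (K*L) ≤ 25*K^3*L^5 := this
      _ = 25*K^3 * L^5 := by ring
    have h2 : c * L^5 ≤ n := by
      have : ((c * L^5 : ℕ) : ℝ) ≤ (n:ℝ) := by push_cast; exact_mod_cast hcL5n
      exact_mod_cast this
    omega
  -- n < c * (L+1)^5 ≤ 32 c L^5
  have hnlt : (n:ℝ) < (c:ℝ) * ((L:ℝ)+1)^(5:ℕ) := by
    have hxlt : x < (L:ℝ) + 1 := by
      rw [hLdef]
      exact_mod_cast Nat.lt_floor_add_one x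
    have : x^(5:ℕ) < ((L:ℝ)+1)^(5:ℕ) := by
      apply pow_lt_pow_left₀ hxlt hx0
      norm_num
    rw [hx5] at this
    calc (n:ℝ) = (c:ℝ) * ((n:ℝ)/(c:ℝ)) := by field_simp
    _ < (c:ℝ) * ((L:ℝ)+1)^(5:ℕ) := by
        apply mul_lt_mul_of_pos_left this hcR
  have hn32L : (n:ℝ) < 32 * (c:ℝ) * (L:ℝ)^(5:ℕ) := by
    have h21 : ((L:ℝ)+1)^(5:ℕ) ≤ (2*(L:ℝ))^(5:ℕ) := by
      apply pow_le_pow_left₀ (by linarith) (by linarith)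
    calc (n:ℝ) < (c:ℝ) * ((L:ℝ)+1)^(5:ℕ) := hnlt
    _ ≤ (c:ℝ) * (2*(L:ℝ))^(5:ℕ) := by
        apply mul_le_mul_of_nonneg_left h21 (le_of_lt hcR)
    _ = 32 * (c:ℝ) * (L:ℝ)^(5:ℕ) := by ring
  refine ⟨Gr n L s, Gr_symm n L s, Gr_unweighted n L s, ?_⟩
  intro β H hEq hcard
  -- first: L ≤ β
  have hLβ : L ≤ β := by
    by_contra hβ
    push_neg at hβ
    have hcount := crit_lb hs1 hL1 hNn hEq hβ
    -- C * n < count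
    have hCK : 800 * C < (K:ℝ) := by
      have h1 : C ≤ (⌈C⌉₊ : ℝ) := Nat.le_ceil C
      have h2 : ((⌈C⌉₊:ℕ):ℝ) + 1 ≤ ((⌈C⌉₊ + 1 : ℕ):ℝ) := by push_cast; linarith
      rw [hK]
      push_cast
      linarith
    have hKL5 : (0:ℝ) < (K:ℝ)^3 * (L:ℝ)^(5:ℕ) := by positivity
    have hchain : C * (n:ℝ) < ((s * ((s+1) * (L*s^2)) : ℕ) : ℝ) := by
      have h1 : C * (n:ℝ) < C * (32 * (c:ℝ) * (L:ℝ)^(5:ℕ)) := by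
        apply mul_lt_mul_of_pos_left hn32L hC
      have h2 : C * (32 * (c:ℝ) * (L:ℝ)^(5:ℕ)) = (800 * C) * ((K:ℝ)^3 * (L:ℝ)^(5:ℕ)) := by
        rw [hc]; push_cast; ring
      have h3 : (800 * C) * ((K:ℝ)^3 * (L:ℝ)^(5:ℕ)) < (K:ℝ) * ((K:ℝ)^3 * (L:ℝ)^(5:ℕ)) := by
        apply mul_lt_mul_of_pos_right hCK hKL5
      have h4 : (K:ℝ) * ((K:ℝ)^3 * (L:ℝ)^(5:ℕ)) = (((K^4 * L^5 : ℕ)):ℝ) := by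
        push_cast; ring
      have h5 : ((K^4 * L^5 : ℕ):ℝ) ≤ ((s * ((s+1) * (L*s^2)) : ℕ) : ℝ) := by
        have := count_ge K L hK1 hL1
        rw [hsdef]
        exact_mod_cast this
      linarith
    have : ((s * ((s+1) * (L*s^2)) : ℕ) : ℝ) ≤ (H.card : ℝ) := by exact_mod_cast hcount
    linarith
  -- second: n^(1/5-δ) ≤ L
  have hfinal : (n:ℝ) ^ ((1:ℝ)/5 - δ) ≤ (L:ℝ) := by
    by_cases hd5 : (1:ℝ)/5 - δ ≤ 0
    · calc (n:ℝ) ^ ((1:ℝ)/5 - δ) ≤ 1 :=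
        Real.rpow_le_one_of_one_le_of_nonpos hnR hd5
      _ ≤ (L:ℝ) := hL1R
    · push_neg at hd5
      set α : ℝ := (1:ℝ)/5 - δ with hα
      have hα0 : 0 < α := hd5
      have hnceil : ((2*(c:ℝ)^((1:ℝ)/5))^((1:ℝ)/δ)) ≤ (n:ℝ) := by
        calc ((2*(c:ℝ)^((1:ℝ)/5))^((1:ℝ)/δ)) ≤ (⌈(2*(c:ℝ)^((1:ℝ)/5))^((1:ℝ)/δ)⌉₊ : ℝ) :=
          Nat.le_ceil _
        _ ≤ (n:ℝ) := by
            have hceil : (⌈(2*(c:ℝ)^((1:ℝ)/5))^((1:ℝ)/δ)⌉₊ : ℕ) ≤ n := by omega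
            exact_mod_cast hceil
      have hbase0 : (0:ℝ) ≤ 2*(c:ℝ)^((1:ℝ)/5) := by positivity
      have hnδ : 2*(c:ℝ)^((1:ℝ)/5) ≤ (n:ℝ)^δ := by
        calc 2*(c:ℝ)^((1:ℝ)/5)
            = ((2*(c:ℝ)^((1:ℝ)/5))^((1:ℝ)/δ))^δ := by
              rw [← Real.rpow_mul hbase0, one_div_mul_cancel (ne_of_gt hδ), Real.rpow_one]
        _ ≤ (n:ℝ)^δ := Real.rpow_le_rpow (Real.rpow_nonneg hbase0 _) hnceil (le_of_lt hδ)
      have hnα1 : (1:ℝ) ≤ (n:ℝ)^α := by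
        calc (1:ℝ) = (n:ℝ)^(0:ℝ) := (Real.rpow_zero _).symm
        _ ≤ (n:ℝ)^α := Real.rpow_le_rpow_of_exponent_le hnR (le_of_lt hα0)
      have hxge : 2*(n:ℝ)^α ≤ x := by
        have hsplit : (n:ℝ)^((1:ℝ)/5) = (n:ℝ)^α * (n:ℝ)^δ := by
          rw [← Real.rpow_add (by linarith : (0:ℝ) < (n:ℝ))]
          congr 1
          rw [hα]; ring
        have hdivr : x = (n:ℝ)^((1:ℝ)/5) / (c:ℝ)^((1:ℝ)/5) := by
          rw [hx, Real.div_rpow (by positivity) (le_of_lt hcR)]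
        rw [hdivr, hsplit, le_div_iff₀ (by positivity : (0:ℝ) < (c:ℝ)^((1:ℝ)/5))]
        calc 2*(n:ℝ)^α * (c:ℝ)^((1:ℝ)/5) = (n:ℝ)^α * (2*(c:ℝ)^((1:ℝ)/5)) := by ring
        _ ≤ (n:ℝ)^α * (n:ℝ)^δ :=
          mul_le_mul_of_nonneg_left hnδ (Real.rpow_nonneg (by linarith) α)
      have hxlt : x < (L:ℝ) + 1 := by
        rw [hLdef]
        exact_mod_cast Nat.lt_floor_add_one x
      linarith
  calc (n:ℝ) ^ ((1:ℝ)/5 - δ) ≤ (L:ℝ) := hfinal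
  _ ≤ (β:ℝ) := by exact_mod_cast hLβ
open Hopsets in
/-- For every `δ > 0` and `C > 0`, for all large enough `n` there is an
`n`-vertex unweighted undirected graph `G` such that every exact hopset `H` for `G`
(i.e. `dist^{(β)}_{G∪H} = dist_G`) with `|H| ≤ C·n` has hopbound `β ≥ n^{1/5−δ}`. -/
theorem stmt_17 (δ C : ℝ) (hδ : 0 < δ) (hC : 0 < C) :
    ∃ n0 : ℕ, ∀ n ≥ n0, ∃ G : WDigraph (Fin n), G.Symmetric ∧ G.Unweighted ∧
      ∀ (β : ℕ) (H : Finset (Fin n × Fin n)),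
        (∀ u v, (G.augment H).hopDist β u v = G.dist u v) →
        (H.card : ℝ) ≤ C * (n : ℝ) →
        (n : ℝ) ^ (1 / 5 - δ) ≤ (β : ℝ) := by
  exact stmt_17' δ C hδ hC
end

section
/- Let C ≥ 1 and let α, γ, δ be reals with 0 < α+γ−1−δ < 1. Suppose that for every n and every n-vertex directed graph G there exists a d-shortcut H for G with |H| ≤ C·n and d ≤ n^{α+γ−1−δ}. Then there exist constants C', c' ≥ 1 such that for every n-vertex directed graph G and every set P ⊆ V×V of at most n pairs, there exists a subgraph G* ⊆ G with at most C'·n^{α+γ−δ}·(log n)^{c'} edges such that for every (u,v) ∈ P with v reachable from u in G, v is reachable from u in G*. (Consequently, a lower bound of Ω(n^α·p^γ) edges for reachability preservers with p pairs implies that some n-vertex directed graph admits no d-shortcut of size O(n) with d ≤ n^{α+γ−1−δ}.) -/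
open scoped ENNReal

namespace Hopsets

/-- `H` is a `d`-shortcut for the directed graph `G`: `H` is contained in the
transitive closure of `G`, and for every pair `(u,v)` with `v` reachable from `u`
in `G`, the graph `G ∪ H` contains a directed `u`-`v` walk with at most `d` edges. -/
def IsShortcut {V : Type} [DecidableEq V] (G : WDigraph V) (d : ℕ)
    (H : Finset (V × V)) : Prop :=
  (∀ e ∈ H, G.Reachable e.1 e.2) ∧
  ∀ u v, G.Reachable u v → ∃ l, IsWalkFrom (G.augment H) u v l ∧ l.length ≤ d

end Hopsets

namespace Stmt19
open Hopsets

variable {V W : Type}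

theorem walk_nil {G : WDigraph V} {u v : V} : IsWalkFrom G u v ([] : List (V × V)) ↔ u = v :=
  Iff.rfl

theorem walk_cons {G : WDigraph V} {u v : V} {e : V × V} {l : List (V × V)} :
    IsWalkFrom G u v (e :: l) ↔ e ∈ G.edges ∧ e.1 = u ∧ IsWalkFrom G e.2 v l :=
  Iff.rfl

theorem walk_append {G : WDigraph V} :
    ∀ {l₁ l₂ : List (V × V)} {u v w : V},
      IsWalkFrom G u v l₁ → IsWalkFrom G v w l₂ → IsWalkFrom G u w (l₁ ++ l₂) := by
  intro l₁
  induction l₁ with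
  | nil => intro l₂ u v w h1 h2; cases (walk_nil.1 h1); exact h2
  | cons e t ih =>
    intro l₂ u v w h1 h2
    obtain ⟨he, he1, ht⟩ := walk_cons.1 h1
    exact walk_cons.2 ⟨he, he1, ih ht h2⟩

theorem reach_refl (G : WDigraph V) (u : V) : G.Reachable u u := ⟨[], rfl⟩

theorem reach_trans {G : WDigraph V} {u v w : V}
    (h1 : G.Reachable u v) (h2 : G.Reachable v w) : G.Reachable u w := by
  obtain ⟨l1, h1⟩ := h1; obtain ⟨l2, h2⟩ := h2
  exact ⟨l1 ++ l2, walk_append h1 h2⟩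

theorem walk_edges_mem {G : WDigraph V} :
    ∀ {l : List (V × V)} {u v : V}, IsWalkFrom G u v l → ∀ e ∈ l, e ∈ G.edges := by
  intro l
  induction l with
  | nil => intro u v _ e he; cases he
  | cons e t ih =>
    intro u v h f hf
    obtain ⟨he, _, ht⟩ := walk_cons.1 h
    rcases List.mem_cons.1 hf with h' | h'
    · subst h'; exact he
    · exact ih ht f h'

theorem walk_map {A : WDigraph V} {B : WDigraph W} (f : V → W) :
    ∀ {l : List (V × V)} {u v : V}, IsWalkFrom A u v l →
      (∀ e ∈ l, ((f e.1, f e.2) : W × W) ∈ B.edges) →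
      IsWalkFrom B (f u) (f v) (l.map (fun e => (f e.1, f e.2))) := by
  intro l
  induction l with
  | nil => intro u v h _; cases (walk_nil.1 h); exact rfl
  | cons e t ih =>
    intro u v h hmem
    obtain ⟨he, he1, ht⟩ := walk_cons.1 h
    refine walk_cons.2 ⟨hmem e List.mem_cons_self, by show f e.1 = f u; rw [he1], ?_⟩
    exact ih ht (fun e' he' => hmem e' (List.mem_cons_of_mem _ he'))

theorem walk_of_subset {A B : WDigraph V} (hAB : A.edges ⊆ B.edges) :
    ∀ {l : List (V × V)} {u v : V}, IsWalkFrom A u v l → IsWalkFrom B u v l := by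
  intro l
  induction l with
  | nil => intro u v h; exact h
  | cons e t ih =>
    intro u v h
    obtain ⟨he, he1, ht⟩ := walk_cons.1 h
    exact walk_cons.2 ⟨hAB he, he1, ih ht⟩

theorem reach_of_subset {A B : WDigraph V} (hAB : A.edges ⊆ B.edges) {u v : V}
    (h : A.Reachable u v) : B.Reachable u v := by
  obtain ⟨l, hl⟩ := h; exact ⟨l, walk_of_subset hAB hl⟩

section Mono
variable [LinearOrder W]

theorem walk_le {A : WDigraph W} (hA : ∀ e ∈ A.edges, e.1 < e.2) :
    ∀ {l : List (W × W)} {u v : W}, IsWalkFrom A u v l → u ≤ v := by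
  intro l
  induction l with
  | nil => intro u v h; exact le_of_eq h
  | cons e t ih =>
    intro u v h
    obtain ⟨he, he1, ht⟩ := walk_cons.1 h
    have := hA e he
    calc u = e.1 := he1.symm
    _ ≤ e.2 := le_of_lt this
    _ ≤ v := ih ht

theorem walk_edge_bounds {A : WDigraph W} (hA : ∀ e ∈ A.edges, e.1 < e.2) :
    ∀ {l : List (W × W)} {u v : W}, IsWalkFrom A u v l →
      ∀ e ∈ l, u ≤ e.1 ∧ e.2 ≤ v := by
  intro l
  induction l with
  | nil => intro u v _ e he; cases he
  | cons e t ih =>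
    intro u v h f hf
    obtain ⟨he, he1, ht⟩ := walk_cons.1 h
    rcases List.mem_cons.1 hf with h' | h'
    · subst h'
      exact ⟨le_of_eq he1.symm, walk_le hA ht⟩
    · have h2 := ih ht f h'
      have : u ≤ e.2 := by
        have := hA e he
        calc u = e.1 := he1.symm
        _ ≤ e.2 := le_of_lt this
      exact ⟨le_trans this h2.1, h2.2⟩

theorem cross_extract {A : WDigraph W} (hA : ∀ e ∈ A.edges, e.1 < e.2) {c : W} :
    ∀ {l : List (W × W)} {u v : W}, IsWalkFrom A u v l → u < c → c ≤ v →
      ∃ s t : W, (s, t) ∈ A.edges ∧ u ≤ s ∧ s < c ∧ c ≤ t ∧ t ≤ v ∧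
        A.Reachable u s ∧ A.Reachable t v := by
  intro l
  induction l with
  | nil => intro u v h hu hv; cases (walk_nil.1 h); exact absurd (lt_of_lt_of_le hu hv) (lt_irrefl u)
  | cons e t ih =>
    intro u v h hu hv
    obtain ⟨he, he1, ht⟩ := walk_cons.1 h
    by_cases hc : c ≤ e.2
    · exact ⟨e.1, e.2, by simpa using he, le_of_eq he1.symm, by rwa [he1], hc,
        walk_le hA ht, ⟨[], he1.symm⟩, ⟨t, ht⟩⟩
    · push_neg at hc
      obtain ⟨s, t', hst, h1, h2, h3, h4, h5, h6⟩ := ih ht hc hv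
      refine ⟨s, t', hst, ?_, h2, h3, h4, ?_, h6⟩
      · calc u = e.1 := he1.symm
        _ ≤ e.2 := le_of_lt (hA e he)
        _ ≤ s := h1
      · exact reach_trans ⟨[e], walk_cons.2 ⟨he, he1, rfl⟩⟩ h5

end Mono

/-- The core divide-and-conquer lemma on monotone `ℕ`-graphs. -/
theorem core (C X y : ℝ) (hC : 1 ≤ C) (hX : 0 < X) (hy : y = X + 1)
    (hyp : ∀ m : ℕ, ∀ G : WDigraph (Fin m), ∃ (d : ℕ) (H : Finset (Fin m × Fin m)),
      IsShortcut G d H ∧ (H.card : ℝ) ≤ C * m ∧ (d : ℝ) ≤ (m : ℝ) ^ X)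
    (D : WDigraph ℕ) (hD : ∀ e ∈ D.edges, e.1 < e.2) :
    ∀ (m lo : ℕ) (P : Finset (ℕ × ℕ)),
      (∀ p ∈ P, lo ≤ p.1 ∧ p.1 < lo + m ∧ lo ≤ p.2 ∧ p.2 < lo + m ∧ D.Reachable p.1 p.2) →
      (P.card : ℝ) ≤ 4 * C * m →
      ∃ F, F ⊆ D.edges ∧ (F.card : ℝ) ≤ 5 * C * (Nat.clog 2 m + 1) * (m : ℝ) ^ y ∧
        ∀ p ∈ P, (D.sub F).Reachable p.1 p.2 := by
  have hC0 : (0:ℝ) < C := lt_of_lt_of_le one_pos hC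
  have hy1 : 1 ≤ y := by rw [hy]; linarith
  have hsplit : ∀ k : ℕ, 1 ≤ k → ((k:ℝ)) ^ y = (k:ℝ) ^ X * k := by
    intro k hk
    have : (0:ℝ) < k := by exact_mod_cast hk
    rw [hy, Real.rpow_add this, Real.rpow_one]
  intro m
  induction m using Nat.strong_induction_on with
  | _ m IH =>
  intro lo P hP hPcard
  by_cases hm2 : m < 2
  · -- base case
    refine ⟨∅, Finset.empty_subset _, ?_, ?_⟩
    · simp only [Finset.card_empty, Nat.cast_zero]
      have h1 : (0:ℝ) ≤ (m:ℝ) ^ y := Real.rpow_nonneg (Nat.cast_nonneg m) y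
      have h2 : (0:ℝ) ≤ (Nat.clog 2 m : ℝ) + 1 := by positivity
      have := mul_nonneg (mul_nonneg (by linarith : (0:ℝ) ≤ 5 * C) h2) h1
      linarith
    · intro p hp
      obtain ⟨h1, h2, h3, h4, _⟩ := hP p hp
      have : p.1 = p.2 := by omega
      exact ⟨[], this⟩
  push_neg at hm2
  -- the inductive step
  have hm0 : 0 < m := by omega
  -- interval graph on Fin m
  set toI : ℕ → Fin m := fun a => ⟨(a - lo) % m, Nat.mod_lt _ hm0⟩ with htoIdef
  have htoI : ∀ a : ℕ, lo ≤ a → a < lo + m → ((toI a : Fin m) : ℕ) = a - lo := by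
    intro a h1 h2
    show (a - lo) % m = a - lo
    exact Nat.mod_eq_of_lt (by omega)
  set Ein : Finset (ℕ × ℕ) :=
    D.edges.filter (fun e => lo ≤ e.1 ∧ e.1 < lo + m ∧ lo ≤ e.2 ∧ e.2 < lo + m) with hEin
  set Phi : WDigraph (Fin m) := ⟨Ein.image (fun e => (toI e.1, toI e.2)), fun _ => 1⟩ with hPhi
  have hPhiD : ∀ e' ∈ Phi.edges, ((lo + (e'.1:ℕ), lo + (e'.2:ℕ)) : ℕ × ℕ) ∈ D.edges ∧
      lo + (e'.1:ℕ) < lo + (e'.2:ℕ) := by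
    intro e' he'
    obtain ⟨e, he, heq⟩ := Finset.mem_image.1 he'
    obtain ⟨heD, hb⟩ := Finset.mem_filter.1 he
    have hlt := hD e heD
    have h1 : ((toI e.1 : Fin m) : ℕ) = e.1 - lo := htoI _ hb.1 hb.2.1
    have h2 : ((toI e.2 : Fin m) : ℕ) = e.2 - lo := htoI _ hb.2.2.1 hb.2.2.2
    have he1 : e'.1 = toI e.1 := by rw [← heq]
    have he2 : e'.2 = toI e.2 := by rw [← heq]
    rw [he1, he2, h1, h2]
    constructor
    · have : (lo + (e.1 - lo), lo + (e.2 - lo)) = e := by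
        have := hb.1; have := hb.2.2.1
        ext <;> simp <;> omega
      rw [this]; exact heD
    · omega
  have hPhimono : ∀ e' ∈ Phi.edges, e'.1 < e'.2 := by
    intro e' he'
    have := hPhiD e' he'
    have h := this.2
    rw [Fin.lt_def]; omega
  have hDPhi : ∀ e ∈ D.edges, lo ≤ e.1 → e.1 < lo + m → lo ≤ e.2 → e.2 < lo + m →
      ((toI e.1, toI e.2) : Fin m × Fin m) ∈ Phi.edges := by
    intro e he h1 h2 h3 h4
    exact Finset.mem_image.2 ⟨e, Finset.mem_filter.2 ⟨he, h1, h2, h3, h4⟩, rfl⟩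
  have hreachDPhi : ∀ a b : ℕ, lo ≤ a → a < lo + m → lo ≤ b → b < lo + m →
      D.Reachable a b → Phi.Reachable (toI a) (toI b) := by
    intro a b h1 h2 h3 h4 hr
    obtain ⟨l, hl⟩ := hr
    refine ⟨l.map (fun e => (toI e.1, toI e.2)), walk_map toI hl ?_⟩
    intro e hel
    have hbd := walk_edge_bounds hD hl e hel
    have heD := walk_edges_mem hl e hel
    have hlt := hD e heD
    exact hDPhi e heD (by omega) (by omega) (by omega) (by omega)
  have hreachPhiD : ∀ i j : Fin m, Phi.Reachable i j → D.Reachable (lo + (i:ℕ)) (lo + (j:ℕ)) := by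
    intro i j hr
    obtain ⟨l, hl⟩ := hr
    exact ⟨_, walk_map (fun i : Fin m => lo + (i:ℕ)) hl (fun e hel =>
      (hPhiD e (walk_edges_mem hl e hel)).1)⟩
  -- get the shortcut for Phi
  obtain ⟨d, H, hsc, hHcard, hd⟩ := hyp m Phi
  have hHfacts : ∀ q ∈ H, lo + (q.1:ℕ) ≤ lo + (q.2:ℕ) ∧
      D.Reachable (lo + (q.1:ℕ)) (lo + (q.2:ℕ)) := by
    intro q hq
    have hr := hsc.1 q hq
    constructor
    · obtain ⟨l, hl⟩ := hr
      have := walk_le hPhimono hl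
      have := Fin.le_def.1 this
      omega
    · exact hreachPhiD _ _ hr
  set cut : ℕ := lo + m / 2 with hcut
  -- crossing edge choice for H-edges
  have hScrAll : ∀ q : Fin m × Fin m, ∃ st : ℕ × ℕ,
      q ∈ H → lo + (q.1:ℕ) < cut → cut ≤ lo + (q.2:ℕ) →
      (st ∈ D.edges ∧ lo + (q.1:ℕ) ≤ st.1 ∧ st.1 < cut ∧ cut ≤ st.2 ∧ st.2 ≤ lo + (q.2:ℕ) ∧
        D.Reachable (lo + (q.1:ℕ)) st.1 ∧ D.Reachable st.2 (lo + (q.2:ℕ))) := by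
    intro q
    by_cases hq : q ∈ H ∧ lo + (q.1:ℕ) < cut ∧ cut ≤ lo + (q.2:ℕ)
    · obtain ⟨l, hl⟩ := (hHfacts q hq.1).2
      obtain ⟨s, t, hst, h1, h2, h3, h4, h5, h6⟩ := cross_extract hD hl hq.2.1 hq.2.2
      exact ⟨(s, t), fun _ _ _ => ⟨hst, h1, h2, h3, h4, h5, h6⟩⟩
    · exact ⟨(0, 0), fun h1 h2 h3 => absurd ⟨h1, h2, h3⟩ hq⟩
  choose stf hstf using hScrAll
  -- the pair sets for children and crossing edges
  set PL : Finset (ℕ × ℕ) := (H.filter (fun q => lo + (q.1:ℕ) < cut)).image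
    (fun q => if lo + (q.2:ℕ) < cut then (lo + (q.1:ℕ), lo + (q.2:ℕ))
      else (lo + (q.1:ℕ), (stf q).1)) with hPL
  set PR : Finset (ℕ × ℕ) := (H.filter (fun q => cut ≤ lo + (q.2:ℕ))).image
    (fun q => if cut ≤ lo + (q.1:ℕ) then (lo + (q.1:ℕ), lo + (q.2:ℕ))
      else ((stf q).2, lo + (q.2:ℕ))) with hPR
  set CS : Finset (ℕ × ℕ) := (H.filter (fun q => lo + (q.1:ℕ) < cut ∧ cut ≤ lo + (q.2:ℕ))).image
    stf with hCS
  have hPLcond : ∀ p ∈ PL, lo ≤ p.1 ∧ p.1 < lo + m / 2 ∧ lo ≤ p.2 ∧ p.2 < lo + m / 2 ∧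
      D.Reachable p.1 p.2 := by
    intro p hp
    obtain ⟨q, hq, heq⟩ := Finset.mem_image.1 hp
    obtain ⟨hqH, hq1⟩ := Finset.mem_filter.1 hq
    obtain ⟨hqle, hqreach⟩ := hHfacts q hqH
    by_cases h2 : lo + (q.2:ℕ) < cut
    · rw [if_pos h2] at heq
      subst heq
      exact ⟨by omega, by omega, by omega, by omega, hqreach⟩
    · rw [if_neg h2] at heq
      subst heq
      obtain ⟨_, ha, hb, _, _, hr, _⟩ := hstf q hqH hq1 (by omega)
      exact ⟨by omega, by omega, by omega, by omega, hr⟩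
  have hPRcond : ∀ p ∈ PR, cut ≤ p.1 ∧ p.1 < cut + (m - m / 2) ∧ cut ≤ p.2 ∧
      p.2 < cut + (m - m / 2) ∧ D.Reachable p.1 p.2 := by
    intro p hp
    obtain ⟨q, hq, heq⟩ := Finset.mem_image.1 hp
    obtain ⟨hqH, hq1⟩ := Finset.mem_filter.1 hq
    obtain ⟨hqle, hqreach⟩ := hHfacts q hqH
    have hq2m : (q.2:ℕ) < m := q.2.2
    have hq1m : (q.1:ℕ) < m := q.1.2
    by_cases h2 : cut ≤ lo + (q.1:ℕ)
    · rw [if_pos h2] at heq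
      subst heq
      exact ⟨by omega, by omega, by omega, by omega, hqreach⟩
    · rw [if_neg h2] at heq
      subst heq
      obtain ⟨hstD, _, _, hc, hd', _, hr⟩ := hstf q hqH (by omega) hq1
      exact ⟨by omega, by omega, by omega, by omega, hr⟩
  have hmR : (m:ℝ) ≤ 4 * ((m / 2 : ℕ) : ℝ) := by
    have : m ≤ 4 * (m / 2) := by omega
    exact_mod_cast this
  have hmR2 : (m:ℝ) ≤ 4 * ((m - m / 2 : ℕ) : ℝ) := by
    have : m ≤ 4 * (m - m / 2) := by omega
    exact_mod_cast this
  have hHcardN : ∀ (Q : Finset (Fin m × Fin m)) (f : Fin m × Fin m → ℕ × ℕ),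
      (((Q.image f).card : ℝ)) ≤ (H.card : ℝ) → True := fun _ _ _ => trivial
  have hPLcard : (PL.card : ℝ) ≤ 4 * C * ((m / 2 : ℕ) : ℝ) := by
    have h1 : PL.card ≤ H.card :=
      le_trans Finset.card_image_le (Finset.card_filter_le _ _)
    have h2 : (PL.card : ℝ) ≤ (H.card : ℝ) := by exact_mod_cast h1
    calc (PL.card : ℝ) ≤ C * m := le_trans h2 hHcard
    _ ≤ C * (4 * ((m / 2 : ℕ) : ℝ)) := mul_le_mul_of_nonneg_left hmR (le_of_lt hC0)
    _ = 4 * C * ((m / 2 : ℕ) : ℝ) := by ring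
  have hPRcard : (PR.card : ℝ) ≤ 4 * C * ((m - m / 2 : ℕ) : ℝ) := by
    have h1 : PR.card ≤ H.card :=
      le_trans Finset.card_image_le (Finset.card_filter_le _ _)
    have h2 : (PR.card : ℝ) ≤ (H.card : ℝ) := by exact_mod_cast h1
    calc (PR.card : ℝ) ≤ C * m := le_trans h2 hHcard
    _ ≤ C * (4 * ((m - m / 2 : ℕ) : ℝ)) := mul_le_mul_of_nonneg_left hmR2 (le_of_lt hC0)
    _ = 4 * C * ((m - m / 2 : ℕ) : ℝ) := by ring
  obtain ⟨FL, hFLsub, hFLcard, hFLserve⟩ := IH (m / 2) (by omega) lo PL hPLcond hPLcard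
  obtain ⟨FR, hFRsub, hFRcard, hFRserve⟩ := IH (m - m / 2) (by omega) cut PR hPRcond hPRcard
  -- choose mixed walks for the pairs in P
  have hwalks : ∀ p : ℕ × ℕ, ∃ l : List (Fin m × Fin m), p ∈ P →
      IsWalkFrom (Phi.augment H) (toI p.1) (toI p.2) l ∧ l.length ≤ d := by
    intro p
    by_cases hp : p ∈ P
    · obtain ⟨h1, h2, h3, h4, hr⟩ := hP p hp
      obtain ⟨l, hl⟩ := hsc.2 _ _ (hreachDPhi _ _ h1 h2 h3 h4 hr)
      exact ⟨l, fun _ => hl⟩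
    · exact ⟨[], fun h => absurd h hp⟩
  choose wk hwk using hwalks
  set WG : Finset (ℕ × ℕ) := P.biUnion (fun p =>
    ((wk p).toFinset.filter (fun e => e ∈ Phi.edges)).image
      (fun e => (lo + (e.1:ℕ), lo + (e.2:ℕ)))) with hWG
  have hWGsub : WG ⊆ D.edges := by
    intro x hx
    obtain ⟨p, hpP, hx2⟩ := Finset.mem_biUnion.1 hx
    obtain ⟨e, he, heq⟩ := Finset.mem_image.1 hx2
    obtain ⟨_, hePhi⟩ := Finset.mem_filter.1 he
    rw [← heq]
    exact (hPhiD e hePhi).1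
  have hWGcardN : WG.card ≤ P.card * d := by
    calc WG.card ≤ ∑ p ∈ P, (((wk p).toFinset.filter (fun e => e ∈ Phi.edges)).image
        (fun e : Fin m × Fin m => (lo + (e.1:ℕ), lo + (e.2:ℕ)))).card := Finset.card_biUnion_le
    _ ≤ ∑ _p ∈ P, d := by
        refine Finset.sum_le_sum ?_
        intro p hp
        exact le_trans Finset.card_image_le (le_trans (Finset.card_filter_le _ _)
          (le_trans (List.toFinset_card_le _) (hwk p hp).2))
    _ = P.card * d := by rw [Finset.sum_const, smul_eq_mul]
  have hCSsub : CS ⊆ D.edges := by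
    intro x hx
    obtain ⟨q, hq, heq⟩ := Finset.mem_image.1 hx
    obtain ⟨hqH, hc1, hc2⟩ := Finset.mem_filter.1 hq
    rw [← heq]
    exact (hstf q hqH hc1 hc2).1
  set F : Finset (ℕ × ℕ) := WG ∪ CS ∪ FL ∪ FR with hF
  have hFLF : FL ⊆ F := by intro x hx; simp only [hF, Finset.mem_union]; tauto
  have hFRF : FR ⊆ F := by intro x hx; simp only [hF, Finset.mem_union]; tauto
  have hCSF : CS ⊆ F := by intro x hx; simp only [hF, Finset.mem_union]; tauto
  have hWGF : WG ⊆ F := by intro x hx; simp only [hF, Finset.mem_union]; tauto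
  have hFsub : F ⊆ D.edges := by
    intro x hx
    simp only [hF, Finset.mem_union] at hx
    rcases hx with ((h | h) | h) | h
    · exact hWGsub h
    · exact hCSsub h
    · exact hFLsub h
    · exact hFRsub h
  -- every H-edge is served by F
  have hserveH : ∀ q ∈ H, (D.sub F).Reachable (lo + (q.1:ℕ)) (lo + (q.2:ℕ)) := by
    intro q hqH
    obtain ⟨hqle, hqreach⟩ := hHfacts q hqH
    have subL : (D.sub FL).edges ⊆ (D.sub F).edges := hFLF
    have subR : (D.sub FR).edges ⊆ (D.sub F).edges := hFRF
    by_cases hA : lo + (q.2:ℕ) < cut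
    · have hmem : ((lo + (q.1:ℕ), lo + (q.2:ℕ)) : ℕ × ℕ) ∈ PL :=
        Finset.mem_image.2 ⟨q, Finset.mem_filter.2 ⟨hqH, by omega⟩, by rw [if_pos hA]⟩
      exact reach_of_subset subL (hFLserve _ hmem)
    by_cases hB : cut ≤ lo + (q.1:ℕ)
    · have hmem : ((lo + (q.1:ℕ), lo + (q.2:ℕ)) : ℕ × ℕ) ∈ PR :=
        Finset.mem_image.2 ⟨q, Finset.mem_filter.2 ⟨hqH, by omega⟩, by rw [if_pos hB]⟩
      exact reach_of_subset subR (hFRserve _ hmem)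
    push_neg at hA hB
    have hmemL : ((lo + (q.1:ℕ), (stf q).1) : ℕ × ℕ) ∈ PL :=
      Finset.mem_image.2 ⟨q, Finset.mem_filter.2 ⟨hqH, hB⟩, by rw [if_neg (by omega)]⟩
    have hmemR : (((stf q).2, lo + (q.2:ℕ)) : ℕ × ℕ) ∈ PR :=
      Finset.mem_image.2 ⟨q, Finset.mem_filter.2 ⟨hqH, hA⟩, by rw [if_neg (by omega)]⟩
    have hmemC : stf q ∈ CS :=
      Finset.mem_image.2 ⟨q, Finset.mem_filter.2 ⟨hqH, hB, hA⟩, rfl⟩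
    have hedge : (D.sub F).Reachable (stf q).1 (stf q).2 :=
      ⟨[stf q], walk_cons.2 ⟨hCSF hmemC, rfl, rfl⟩⟩
    exact reach_trans (reach_trans (reach_of_subset subL (hFLserve _ hmemL)) hedge)
      (reach_of_subset subR (hFRserve _ hmemR))
  -- splice mixed walks into F-walks
  have hsplice : ∀ (l : List (Fin m × Fin m)) (a b : Fin m),
      IsWalkFrom (Phi.augment H) a b l →
      (∀ e ∈ l, e ∈ Phi.edges → ((lo + (e.1:ℕ), lo + (e.2:ℕ)) : ℕ × ℕ) ∈ F) →
      (D.sub F).Reachable (lo + (a:ℕ)) (lo + (b:ℕ)) := by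
    intro l
    induction l with
    | nil =>
      intro a b hw _
      cases (walk_nil.1 hw)
      exact reach_refl _ _
    | cons e t ih =>
      intro a b hw hcond
      obtain ⟨hemem, he1, ht⟩ := walk_cons.1 hw
      have hemem' : e ∈ Phi.edges ∪ H := hemem
      have step : (D.sub F).Reachable (lo + (a:ℕ)) (lo + (e.2:ℕ)) := by
        by_cases hg : e ∈ Phi.edges
        · refine ⟨[(lo + (e.1:ℕ), lo + (e.2:ℕ))], walk_cons.2 ⟨hcond e List.mem_cons_self hg, ?_, rfl⟩⟩
          show lo + (e.1:ℕ) = lo + (a:ℕ)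
          rw [he1]
        · have heH : e ∈ H := by
            rcases Finset.mem_union.1 hemem' with h | h
            · exact absurd h hg
            · exact h
          have := hserveH e heH
          rwa [he1] at this
      exact reach_trans step (ih e.2 b ht (fun e' he' hg => hcond e' (List.mem_cons_of_mem _ he') hg))
  have hserveP : ∀ p ∈ P, (D.sub F).Reachable p.1 p.2 := by
    intro p hp
    obtain ⟨h1, h2, h3, h4, _⟩ := hP p hp
    have hres := hsplice (wk p) (toI p.1) (toI p.2) (hwk p hp).1 ?_
    · have e1 : lo + ((toI p.1 : Fin m) : ℕ) = p.1 := by rw [htoI _ h1 h2]; omega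
      have e2 : lo + ((toI p.2 : Fin m) : ℕ) = p.2 := by rw [htoI _ h3 h4]; omega
      rwa [e1, e2] at hres
    · intro e hel hg
      refine hWGF (Finset.mem_biUnion.2 ⟨p, hp, Finset.mem_image.2 ⟨e, ?_, rfl⟩⟩)
      exact Finset.mem_filter.2 ⟨List.mem_toFinset.2 hel, hg⟩
  -- cardinality bound
  refine ⟨F, hFsub, ?_, hserveP⟩
  have hm1 : 1 ≤ m := by omega
  have hmcast1 : (1:ℝ) ≤ (m:ℝ) := by exact_mod_cast hm1
  have hyne : y ≠ 0 := by intro h; rw [h] at hy1; linarith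
  have haux : ∀ k : ℕ, k ≤ m → ((k:ℝ)) ^ y ≤ (m:ℝ) ^ X * k := by
    intro k hk
    rcases Nat.eq_zero_or_pos k with h | h
    · subst h
      simp [Real.zero_rpow hyne]
    · rw [hsplit k h]
      have hkc : (0:ℝ) ≤ (k:ℝ) := Nat.cast_nonneg k
      have : ((k:ℝ)) ^ X ≤ (m:ℝ) ^ X :=
        Real.rpow_le_rpow hkc (by exact_mod_cast hk) (le_of_lt hX)
      exact mul_le_mul_of_nonneg_right this hkc
  have hsum : ((m / 2 : ℕ) : ℝ) + ((m - m / 2 : ℕ) : ℝ) = (m:ℝ) := by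
    have : (m / 2) + (m - m / 2) = m := by omega
    exact_mod_cast this
  have hA2 : ((m / 2 : ℕ) : ℝ) ^ y + ((m - m / 2 : ℕ) : ℝ) ^ y ≤ (m:ℝ) ^ y := by
    have h1 := haux (m / 2) (by omega)
    have h2 := haux (m - m / 2) (by omega)
    have h3 : (m:ℝ) ^ X * ((m / 2 : ℕ) : ℝ) + (m:ℝ) ^ X * ((m - m / 2 : ℕ) : ℝ)
        = (m:ℝ) ^ X * (m:ℝ) := by rw [← mul_add, hsum]
    rw [hsplit m hm1]
    linarith
  have hclog : Nat.clog 2 m = Nat.clog 2 ((m + 1) / 2) + 1 := by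
    have := Nat.clog_of_two_le (b := 2) (by norm_num) hm2
    simpa using this
  have hclL : (((Nat.clog 2 (m / 2) : ℕ) : ℝ)) + 1 ≤ ((Nat.clog 2 m : ℕ) : ℝ) := by
    have h := Nat.clog_mono_right 2 (show m / 2 ≤ (m + 1) / 2 by omega)
    have : Nat.clog 2 (m / 2) + 1 ≤ Nat.clog 2 m := by omega
    exact_mod_cast this
  have hclR : (((Nat.clog 2 (m - m / 2) : ℕ) : ℝ)) + 1 ≤ ((Nat.clog 2 m : ℕ) : ℝ) := by
    have h := Nat.clog_mono_right 2 (show m - m / 2 ≤ (m + 1) / 2 by omega)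
    have : Nat.clog 2 (m - m / 2) + 1 ≤ Nat.clog 2 m := by omega
    exact_mod_cast this
  set L : ℝ := ((Nat.clog 2 m : ℕ) : ℝ) with hL
  set A : ℝ := ((m / 2 : ℕ) : ℝ) ^ y with hA
  set B : ℝ := ((m - m / 2 : ℕ) : ℝ) ^ y with hB
  set M : ℝ := (m:ℝ) ^ y with hM
  have hA0 : 0 ≤ A := Real.rpow_nonneg (Nat.cast_nonneg _) y
  have hB0 : 0 ≤ B := Real.rpow_nonneg (Nat.cast_nonneg _) y
  have hM0 : 0 ≤ M := Real.rpow_nonneg (Nat.cast_nonneg _) y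
  have hL0 : 0 ≤ L := Nat.cast_nonneg _
  have hcardN : F.card ≤ WG.card + CS.card + FL.card + FR.card := by
    calc F.card ≤ (WG ∪ CS ∪ FL).card + FR.card := Finset.card_union_le _ _
    _ ≤ ((WG ∪ CS).card + FL.card) + FR.card := by
        exact add_le_add_left (Finset.card_union_le _ _) _
    _ ≤ ((WG.card + CS.card) + FL.card) + FR.card := by
        exact add_le_add_left (add_le_add_left (Finset.card_union_le _ _) _) _
  have hcardR : (F.card : ℝ) ≤ (WG.card : ℝ) + (CS.card : ℝ) + (FL.card : ℝ) + (FR.card : ℝ) := by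
    exact_mod_cast hcardN
  have e1 : (WG.card : ℝ) ≤ 4 * C * M := by
    have hWGR : (WG.card : ℝ) ≤ (P.card : ℝ) * (d : ℝ) := by exact_mod_cast hWGcardN
    have hd0 : (0:ℝ) ≤ (d:ℝ) := Nat.cast_nonneg _
    have hP0 : (0:ℝ) ≤ (P.card : ℝ) := Nat.cast_nonneg _
    have : (P.card : ℝ) * (d : ℝ) ≤ (4 * C * m) * ((m:ℝ) ^ X) :=
      mul_le_mul hPcard hd hd0 (by positivity)
    have hity : (4 * C * (m:ℝ)) * ((m:ℝ) ^ X) = 4 * C * M := by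
      rw [hM, hsplit m hm1]; ring
    linarith [hity ▸ this]
  have e2 : (CS.card : ℝ) ≤ C * M := by
    have h1 : CS.card ≤ H.card := le_trans Finset.card_image_le (Finset.card_filter_le _ _)
    have h2 : (CS.card : ℝ) ≤ C * (m:ℝ) := le_trans (by exact_mod_cast h1) hHcard
    have h3 : (m:ℝ) ≤ M := by
      rw [hM]
      calc (m:ℝ) = (m:ℝ) ^ (1:ℝ) := (Real.rpow_one _).symm
      _ ≤ (m:ℝ) ^ y := Real.rpow_le_rpow_of_exponent_le hmcast1 hy1
    calc (CS.card : ℝ) ≤ C * (m:ℝ) := h2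
    _ ≤ C * M := mul_le_mul_of_nonneg_left h3 (le_of_lt hC0)
  have e3 : (FL.card : ℝ) ≤ 5 * C * L * A := by
    calc (FL.card : ℝ) ≤ 5 * C * (((Nat.clog 2 (m / 2) : ℕ) : ℝ) + 1) * A := hFLcard
    _ ≤ 5 * C * L * A := by
        have := mul_le_mul_of_nonneg_left hclL (by linarith : (0:ℝ) ≤ 5 * C)
        exact mul_le_mul_of_nonneg_right (by linarith) hA0
  have e4 : (FR.card : ℝ) ≤ 5 * C * L * B := by
    calc (FR.card : ℝ) ≤ 5 * C * (((Nat.clog 2 (m - m / 2) : ℕ) : ℝ) + 1) * B := hFRcard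
    _ ≤ 5 * C * L * B := by
        have := mul_le_mul_of_nonneg_left hclR (by linarith : (0:ℝ) ≤ 5 * C)
        exact mul_le_mul_of_nonneg_right (by linarith) hB0
  have e7 : 5 * C * L * A + 5 * C * L * B ≤ 5 * C * L * M := by
    have h := mul_le_mul_of_nonneg_left hA2 (show (0:ℝ) ≤ 5 * C * L by positivity)
    calc 5 * C * L * A + 5 * C * L * B = 5 * C * L * (A + B) := by ring
    _ ≤ 5 * C * L * M := h
  have hRHS : 5 * C * (((Nat.clog 2 m : ℕ) : ℝ) + 1) * (m:ℝ) ^ y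
      = 5 * C * M + 5 * C * L * M := by rw [← hM, ← hL]; ring
  rw [hRHS]
  linarith


section SCC
variable {n : ℕ} (G : WDigraph (Fin n))

def SameSCC (u v : Fin n) : Prop := G.Reachable u v ∧ G.Reachable v u

theorem sameSCC_refl (v : Fin n) : SameSCC G v v := ⟨reach_refl _ _, reach_refl _ _⟩

theorem sameSCC_symm {u v : Fin n} (h : SameSCC G u v) : SameSCC G v u := ⟨h.2, h.1⟩

theorem sameSCC_trans {u v w : Fin n} (h1 : SameSCC G u v) (h2 : SameSCC G v w) :
    SameSCC G u w := ⟨reach_trans h1.1 h2.1, reach_trans h2.2 h1.2⟩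

theorem min'_eq_of_eq {α : Type*} [LinearOrder α] {s t : Finset α} (h : s = t)
    (hs : s.Nonempty) (ht : t.Nonempty) : s.min' hs = t.min' ht := by subst h; rfl

open Classical in
noncomputable def rho (v : Fin n) : Fin n :=
  (Finset.univ.filter (fun w => SameSCC G v w)).min'
    ⟨v, Finset.mem_filter.2 ⟨Finset.mem_univ v, sameSCC_refl G v⟩⟩

theorem rho_same (v : Fin n) : SameSCC G v (rho G v) := by
  classical
  have := Finset.min'_mem (Finset.univ.filter (fun w => SameSCC G v w))
    ⟨v, Finset.mem_filter.2 ⟨Finset.mem_univ v, sameSCC_refl G v⟩⟩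
  exact (Finset.mem_filter.1 this).2

theorem rho_congr {u v : Fin n} (h : SameSCC G u v) : rho G u = rho G v := by
  classical
  apply min'_eq_of_eq
  ext w
  simp only [Finset.mem_filter, Finset.mem_univ, true_and]
  exact ⟨fun hw => sameSCC_trans G (sameSCC_symm G h) hw, fun hw => sameSCC_trans G h hw⟩

open Classical in
noncomputable def kap (v : Fin n) : ℕ × ℕ :=
  ((Finset.univ.filter (fun w => G.Reachable w v)).card, (rho G v : ℕ))

def ltlex (a b : ℕ × ℕ) : Prop := a.1 < b.1 ∨ (a.1 = b.1 ∧ a.2 < b.2)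

theorem ltlex_trans {a b c : ℕ × ℕ} (h1 : ltlex a b) (h2 : ltlex b c) : ltlex a c := by
  rcases a with ⟨a1, a2⟩; rcases b with ⟨b1, b2⟩; rcases c with ⟨c1, c2⟩
  simp only [ltlex] at *
  omega

theorem ltlex_irrefl (a : ℕ × ℕ) : ¬ ltlex a a := by
  rcases a with ⟨a1, a2⟩
  simp only [ltlex]
  omega

theorem ltlex_total (a b : ℕ × ℕ) : a = b ∨ ltlex a b ∨ ltlex b a := by
  rcases a with ⟨a1, a2⟩; rcases b with ⟨b1, b2⟩
  simp only [ltlex, Prod.mk.injEq]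
  omega

theorem kap_congr {u v : Fin n} (h : SameSCC G u v) : kap G u = kap G v := by
  classical
  unfold kap
  have h1 : (Finset.univ.filter (fun w => G.Reachable w u))
      = (Finset.univ.filter (fun w => G.Reachable w v)) := by
    ext w
    simp only [Finset.mem_filter, Finset.mem_univ, true_and]
    exact ⟨fun hw => reach_trans hw h.1, fun hw => reach_trans hw h.2⟩
  rw [h1, rho_congr G h]

theorem kap_inj {u v : Fin n} (h : kap G u = kap G v) : SameSCC G u v := by
  have h2 : (rho G u : ℕ) = (rho G v : ℕ) := congrArg Prod.snd h
  have h3 : rho G u = rho G v := Fin.val_injective h2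
  exact sameSCC_trans G (rho_same G u) (h3 ▸ sameSCC_symm G (rho_same G v))

theorem kap_lt {u v : Fin n} (h : G.Reachable u v) (h2 : ¬ SameSCC G u v) :
    ltlex (kap G u) (kap G v) := by
  classical
  have hsub : (Finset.univ.filter (fun w => G.Reachable w u))
      ⊆ (Finset.univ.filter (fun w => G.Reachable w v)) := by
    intro w hw
    simp only [Finset.mem_filter, Finset.mem_univ, true_and] at *
    exact reach_trans hw h
  have hle := Finset.card_le_card hsub
  rcases lt_or_eq_of_le hle with hlt | heq
  · exact Or.inl hlt
  · exfalso
    have heqset := Finset.eq_of_subset_of_card_le hsub (le_of_eq heq.symm)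
    have hv : v ∈ Finset.univ.filter (fun w => G.Reachable w v) := by
      simp [reach_refl]
    rw [← heqset] at hv
    have : G.Reachable v u := (Finset.mem_filter.1 hv).2
    exact h2 ⟨h, this⟩

open Classical in
noncomputable def rnk (v : Fin n) : ℕ :=
  ((Finset.univ.image (kap G)).filter (fun k => ltlex k (kap G v))).card

theorem rnk_lt {u v : Fin n} (h : ltlex (kap G u) (kap G v)) : rnk G u < rnk G v := by
  classical
  apply Finset.card_lt_card
  constructor
  · intro k hk
    obtain ⟨hk1, hk2⟩ := Finset.mem_filter.1 hk
    exact Finset.mem_filter.2 ⟨hk1, ltlex_trans hk2 h⟩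
  · intro hsub
    have hmem : kap G u ∈ (Finset.univ.image (kap G)).filter (fun k => ltlex k (kap G v)) :=
      Finset.mem_filter.2 ⟨Finset.mem_image.2 ⟨u, Finset.mem_univ u, rfl⟩, h⟩
    have := (Finset.mem_filter.1 (hsub hmem)).2
    exact ltlex_irrefl _ this

theorem rnk_congr {u v : Fin n} (h : kap G u = kap G v) : rnk G u = rnk G v := by
  unfold rnk; rw [h]

theorem rnk_inj {u v : Fin n} (h : rnk G u = rnk G v) : SameSCC G u v := by
  rcases ltlex_total (kap G u) (kap G v) with he | hl | hl
  · exact kap_inj G he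
  · exact absurd h (Nat.ne_of_lt (rnk_lt G hl))
  · exact absurd h.symm (Nat.ne_of_lt (rnk_lt G hl))

theorem rnk_le {u v : Fin n} (h : G.Reachable u v) : rnk G u ≤ rnk G v := by
  by_cases hs : SameSCC G u v
  · exact le_of_eq (rnk_congr G (kap_congr G hs))
  · exact le_of_lt (rnk_lt G (kap_lt G h hs))

theorem rnk_lt_n (v : Fin n) : rnk G v < n := by
  classical
  have h1 : rnk G v < (Finset.univ.image (kap G)).card := by
    apply Finset.card_lt_card
    constructor
    · exact Finset.filter_subset _ _
    · intro hsub
      have hmem : kap G v ∈ Finset.univ.image (kap G) :=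
        Finset.mem_image.2 ⟨v, Finset.mem_univ v, rfl⟩
      have := (Finset.mem_filter.1 (hsub hmem)).2
      exact ltlex_irrefl _ this
  have h2 : (Finset.univ.image (kap G)).card ≤ n := by
    calc (Finset.univ.image (kap G)).card ≤ (Finset.univ : Finset (Fin n)).card :=
      Finset.card_image_le
    _ = n := by simp
  omega

open Classical in
noncomputable def DD : WDigraph ℕ :=
  ⟨(G.edges.image (fun e => ((rnk G e.1, rnk G e.2) : ℕ × ℕ))).filter (fun e => e.1 < e.2),
    fun _ => 1⟩

theorem DD_mono : ∀ e ∈ (DD G).edges, e.1 < e.2 := by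
  intro e he
  exact (Finset.mem_filter.1 he).2

theorem edge_reach {e : Fin n × Fin n} (he : e ∈ G.edges) : G.Reachable e.1 e.2 :=
  ⟨[e], walk_cons.2 ⟨he, rfl, rfl⟩⟩

theorem DD_fwd : ∀ {l : List (Fin n × Fin n)} {u v : Fin n}, IsWalkFrom G u v l →
    (DD G).Reachable (rnk G u) (rnk G v) := by
  classical
  intro l
  induction l with
  | nil => intro u v h; cases (walk_nil.1 h); exact reach_refl _ _
  | cons e t ih =>
    intro u v h
    obtain ⟨he, he1, ht⟩ := walk_cons.1 h
    have hIH := ih ht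
    by_cases hr : rnk G e.1 = rnk G e.2
    · rw [← he1, hr]; exact hIH
    · have hlt : rnk G e.1 < rnk G e.2 :=
        lt_of_le_of_ne (rnk_le G (edge_reach G he)) hr
      have hmem : ((rnk G e.1, rnk G e.2) : ℕ × ℕ) ∈ (DD G).edges :=
        Finset.mem_filter.2 ⟨Finset.mem_image.2 ⟨e, he, rfl⟩, hlt⟩
      rw [← he1]
      exact reach_trans ⟨[(rnk G e.1, rnk G e.2)], walk_cons.2 ⟨hmem, rfl, rfl⟩⟩ hIH

end SCC


section Trees
variable {n : ℕ} (G : WDigraph (Fin n))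

theorem walk_concat {V : Type} {G' : WDigraph V} :
    ∀ {l : List (V × V)} {e : V × V} {u v : V}, IsWalkFrom G' u v (l ++ [e]) →
      IsWalkFrom G' u e.1 l ∧ e ∈ G'.edges ∧ e.2 = v := by
  intro l
  induction l with
  | nil =>
    intro e u v h
    obtain ⟨he, he1, ht⟩ := walk_cons.1 h
    exact ⟨he1.symm, he, walk_nil.1 ht⟩
  | cons f t ih =>
    intro e u v h
    obtain ⟨hf, hf1, ht⟩ := walk_cons.1 h
    obtain ⟨h1, h2, h3⟩ := ih ht
    exact ⟨walk_cons.2 ⟨hf, hf1, h1⟩, h2, h3⟩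

def OutLenP (v : Fin n) (k : ℕ) : Prop :=
  ∃ l, IsWalkFrom G (rho G v) v l ∧ l.length = k

def InLenP (v : Fin n) (k : ℕ) : Prop :=
  ∃ l, IsWalkFrom G v (rho G v) l ∧ l.length = k

theorem outLen_ex (v : Fin n) : ∃ k, OutLenP G v k := by
  obtain ⟨l, hl⟩ := (rho_same G v).2
  exact ⟨l.length, l, hl, rfl⟩

theorem inLen_ex (v : Fin n) : ∃ k, InLenP G v k := by
  obtain ⟨l, hl⟩ := (rho_same G v).1
  exact ⟨l.length, l, hl, rfl⟩

open Classical in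
noncomputable def lenO (v : Fin n) : ℕ := Nat.find (outLen_ex G v)

open Classical in
noncomputable def lenI (v : Fin n) : ℕ := Nat.find (inLen_ex G v)

open Classical in
theorem lenO_spec (v : Fin n) : OutLenP G v (lenO G v) := Nat.find_spec (outLen_ex G v)

open Classical in
theorem lenI_spec (v : Fin n) : InLenP G v (lenI G v) := Nat.find_spec (inLen_ex G v)

open Classical in
theorem lenO_min {v : Fin n} {k : ℕ} (h : OutLenP G v k) : lenO G v ≤ k :=
  Nat.find_min' (outLen_ex G v) h

open Classical in
theorem lenI_min {v : Fin n} {k : ℕ} (h : InLenP G v k) : lenI G v ≤ k :=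
  Nat.find_min' (inLen_ex G v) h

noncomputable def wO (v : Fin n) : List (Fin n × Fin n) := (lenO_spec G v).choose

noncomputable def wI (v : Fin n) : List (Fin n × Fin n) := (lenI_spec G v).choose

theorem wO_spec (v : Fin n) :
    IsWalkFrom G (rho G v) v (wO G v) ∧ (wO G v).length = lenO G v :=
  (lenO_spec G v).choose_spec

theorem wI_spec (v : Fin n) :
    IsWalkFrom G v (rho G v) (wI G v) ∧ (wI G v).length = lenI G v :=
  (lenI_spec G v).choose_spec

noncomputable def eOut (v : Fin n) : Fin n × Fin n := (wO G v).getLast?.getD (v, v)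

noncomputable def eIn (v : Fin n) : Fin n × Fin n := (wI G v).head?.getD (v, v)

open Classical in
noncomputable def TreeE : Finset (Fin n × Fin n) :=
  Finset.univ.biUnion (fun v => if v = rho G v then ∅ else {eOut G v, eIn G v})

theorem out_step {v : Fin n} (h : v ≠ rho G v) :
    ∃ e L, wO G v = L ++ [e] ∧ e ∈ G.edges ∧ e.2 = v ∧ eOut G v = e ∧
      IsWalkFrom G (rho G v) e.1 L := by
  rcases List.eq_nil_or_concat (wO G v) with hnil | ⟨L, e, heq⟩
  · exfalso
    have := (wO_spec G v).1
    rw [hnil] at this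
    exact h (walk_nil.1 this).symm
  · rw [List.concat_eq_append] at heq
    have hw := (wO_spec G v).1
    rw [heq] at hw
    obtain ⟨h1, h2, h3⟩ := walk_concat hw
    refine ⟨e, L, heq, h2, h3, ?_, h1⟩
    unfold eOut
    rw [heq, List.getLast?_concat]
    rfl

theorem in_step {v : Fin n} (h : v ≠ rho G v) :
    ∃ e t, wI G v = e :: t ∧ e ∈ G.edges ∧ e.1 = v ∧ eIn G v = e ∧
      IsWalkFrom G e.2 (rho G v) t := by
  rcases (wI G v).eq_nil_or_concat with hnil | _
  all_goals {
    cases hwI : wI G v with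
    | nil =>
      exfalso
      have := (wI_spec G v).1
      rw [hwI] at this
      exact h (walk_nil.1 this)
    | cons e t =>
      have hw := (wI_spec G v).1
      rw [hwI] at hw
      obtain ⟨h1, h2, h3⟩ := walk_cons.1 hw
      refine ⟨e, t, rfl, h1, h2, ?_, h3⟩
      unfold eIn
      rw [hwI]
      rfl
  }

theorem treeE_sub : TreeE G ⊆ G.edges := by
  classical
  intro x hx
  obtain ⟨v, _, hx2⟩ := Finset.mem_biUnion.1 hx
  by_cases h : v = rho G v
  · rw [if_pos h] at hx2; cases hx2
  · rw [if_neg h] at hx2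
    rcases Finset.mem_insert.1 hx2 with h1 | h1
    · obtain ⟨e, L, _, he, _, heq, _⟩ := out_step G h
      rw [h1, heq]; exact he
    · obtain ⟨e, t, _, he, _, heq, _⟩ := in_step G h
      rw [Finset.mem_singleton.1 h1, heq]; exact he

theorem eOut_mem {v : Fin n} (h : v ≠ rho G v) : eOut G v ∈ TreeE G := by
  classical
  refine Finset.mem_biUnion.2 ⟨v, Finset.mem_univ v, ?_⟩
  rw [if_neg h]
  exact Finset.mem_insert_self _ _

theorem eIn_mem {v : Fin n} (h : v ≠ rho G v) : eIn G v ∈ TreeE G := by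
  classical
  refine Finset.mem_biUnion.2 ⟨v, Finset.mem_univ v, ?_⟩
  rw [if_neg h]
  exact Finset.mem_insert.2 (Or.inr (Finset.mem_singleton_self _))

theorem treeE_card : (TreeE G).card ≤ 2 * n := by
  classical
  calc (TreeE G).card ≤ ∑ v : Fin n, (if v = rho G v then (∅ : Finset (Fin n × Fin n))
      else {eOut G v, eIn G v}).card := Finset.card_biUnion_le
  _ ≤ ∑ _v : Fin n, 2 := by
      refine Finset.sum_le_sum ?_
      intro v _
      by_cases h : v = rho G v
      · rw [if_pos h]; simp
      · rw [if_neg h]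
        exact le_trans (Finset.card_insert_le _ _) (by simp)
  _ = 2 * n := by simp [mul_comm]

theorem tree_out : ∀ (k : ℕ) (v : Fin n), lenO G v ≤ k →
    (G.sub (TreeE G)).Reachable (rho G v) v := by
  intro k
  induction k with
  | zero =>
    intro v hv
    have hsp := wO_spec G v
    have hlen : (wO G v).length = 0 := by omega
    have hnil : wO G v = [] := List.length_eq_zero_iff.1 hlen
    have := hsp.1
    rw [hnil] at this
    rw [walk_nil.1 this]
    exact reach_refl _ _
  | succ k ih =>
    intro v hv
    by_cases h : v = rho G v
    · rw [← h]; exact reach_refl _ _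
    · obtain ⟨e, L, heq, he, he2, heout, hwalkL⟩ := out_step G h
      set p := e.1 with hp
      have hreach_rp : G.Reachable (rho G v) p := ⟨L, hwalkL⟩
      have hscc : SameSCC G p v := by
        constructor
        · exact ⟨[e], walk_cons.2 ⟨he, rfl, he2⟩⟩
        · exact reach_trans (rho_same G v).1 hreach_rp
      have hrr : rho G p = rho G v := rho_congr G hscc
      have hlenL : L.length + 1 = lenO G v := by
        have := (wO_spec G v).2
        rw [heq] at this
        simpa using this
      have hlenp : lenO G p ≤ k := by
        have hmin : lenO G p ≤ L.length := lenO_min G ⟨L, by rw [hrr]; exact hwalkL, rfl⟩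
        omega
      have hIH := ih p hlenp
      rw [hrr] at hIH
      have hstep : (G.sub (TreeE G)).Reachable p v :=
        ⟨[e], walk_cons.2 ⟨by rw [← heout]; exact eOut_mem G h, rfl, he2⟩⟩
      exact reach_trans hIH hstep

theorem tree_in : ∀ (k : ℕ) (v : Fin n), lenI G v ≤ k →
    (G.sub (TreeE G)).Reachable v (rho G v) := by
  intro k
  induction k with
  | zero =>
    intro v hv
    have hsp := wI_spec G v
    have hlen : (wI G v).length = 0 := by omega
    have hnil : wI G v = [] := List.length_eq_zero_iff.1 hlen
    have := hsp.1
    rw [hnil] at this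
    rw [← walk_nil.1 this]
    exact reach_refl _ _
  | succ k ih =>
    intro v hv
    by_cases h : v = rho G v
    · rw [← h]; exact reach_refl _ _
    · obtain ⟨e, t, heq, he, he1, hein, hwalkt⟩ := in_step G h
      set q := e.2 with hq
      have hreach_q : G.Reachable q (rho G v) := ⟨t, hwalkt⟩
      have hscc : SameSCC G q v := by
        constructor
        · exact reach_trans hreach_q (rho_same G v).2
        · exact ⟨[e], walk_cons.2 ⟨he, he1, rfl⟩⟩
      have hrr : rho G q = rho G v := rho_congr G hscc
      have hlent : t.length + 1 = lenI G v := by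
        have := (wI_spec G v).2
        rw [heq] at this
        simpa using this
      have hlenq : lenI G q ≤ k := by
        have hmin : lenI G q ≤ t.length := lenI_min G ⟨t, by rw [hrr]; exact hwalkt, rfl⟩
        omega
      have hIH := ih q hlenq
      rw [hrr] at hIH
      have hstep : (G.sub (TreeE G)).Reachable v q :=
        ⟨[e], walk_cons.2 ⟨by rw [← hein]; exact eIn_mem G h, he1, rfl⟩⟩
      exact reach_trans hstep hIH

theorem scc_reach {u v : Fin n} (h : SameSCC G u v) :
    (G.sub (TreeE G)).Reachable u v := by
  have h1 := tree_in G (lenI G u) u le_rfl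
  have h2 := tree_out G (lenO G v) v le_rfl
  rw [rho_congr G h] at h1
  exact reach_trans h1 h2

theorem lift_walk {F : Finset (ℕ × ℕ)} {Estar : Finset (Fin n × Fin n)}
    (hT : TreeE G ⊆ Estar)
    (hwit : ∀ e ∈ F, ∃ g : Fin n × Fin n, g ∈ Estar ∧ g ∈ G.edges ∧
      ((rnk G g.1 : ℕ), (rnk G g.2 : ℕ)) = e) :
    ∀ (l : List (ℕ × ℕ)) (a b : ℕ), IsWalkFrom ((DD G).sub F) a b l →
      ∀ u v : Fin n, rnk G u = a → rnk G v = b → (G.sub Estar).Reachable u v := by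
  intro l
  induction l with
  | nil =>
    intro a b hw u v hu hv
    have hab : a = b := walk_nil.1 hw
    have : SameSCC G u v := rnk_inj G (by omega)
    exact reach_of_subset (show (G.sub (TreeE G)).edges ⊆ (G.sub Estar).edges from hT)
      (scc_reach G this)
  | cons e t ih =>
    intro a b hw u v hu hv
    obtain ⟨he, he1, ht⟩ := walk_cons.1 hw
    obtain ⟨g, hg1, hg2, hg3⟩ := hwit e he
    have hru : rnk G u = rnk G g.1 := by
      have : (rnk G g.1 : ℕ) = e.1 := congrArg Prod.fst hg3
      omega
    have hpart1 : (G.sub Estar).Reachable u g.1 :=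
      reach_of_subset (show (G.sub (TreeE G)).edges ⊆ (G.sub Estar).edges from hT)
        (scc_reach G (rnk_inj G hru))
    have hpart2 : (G.sub Estar).Reachable g.1 g.2 :=
      ⟨[g], walk_cons.2 ⟨hg1, rfl, rfl⟩⟩
    have hpart3 : (G.sub Estar).Reachable g.2 v := by
      refine ih e.2 b ht g.2 v ?_ hv
      exact congrArg Prod.snd hg3
    exact reach_trans (reach_trans hpart1 hpart2) hpart3

end Trees


theorem clog_le_log {n : ℕ} (hn : 2 ≤ n) :
    ((Nat.clog 2 n : ℕ) : ℝ) + 1 ≤ 5 * Real.log n := by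
  set k := Nat.clog 2 n with hk
  have hk1 : 1 ≤ k := Nat.clog_pos (by norm_num) hn
  have hpow : 2 ^ (k - 1) < n := by
    have := Nat.pow_pred_clog_lt_self (b := 2) (by norm_num) (x := n) (by omega)
    simpa [Nat.pred_eq_sub_one] using this
  have hlt : ((2:ℝ)) ^ ((k - 1 : ℕ)) < (n:ℝ) := by exact_mod_cast hpow
  have hlog : ((k - 1 : ℕ) : ℝ) * Real.log 2 < Real.log n := by
    have := Real.log_lt_log (by positivity) hlt
    rwa [Real.log_pow] at this
  have hcast : ((k - 1 : ℕ) : ℝ) = (k : ℝ) - 1 := by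
    push_cast [hk1]
    ring
  rw [hcast] at hlog
  have h2 := Real.log_two_gt_d9
  have h3 : Real.log 2 ≤ Real.log n := Real.log_le_log (by norm_num) (by exact_mod_cast hn)
  have hk0 : (1:ℝ) ≤ (k:ℝ) := by exact_mod_cast hk1
  nlinarith [mul_nonneg (by linarith : (0:ℝ) ≤ (k:ℝ) - 1)
    (by linarith : (0:ℝ) ≤ Real.log 2 - 0.6931471803)]

theorem stmt19main (C α γ δ : ℝ) (hC : 1 ≤ C)
    (h1 : 0 < α + γ - 1 - δ) (h2 : α + γ - 1 - δ < 1)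
    (hyp : ∀ n : ℕ, ∀ G : WDigraph (Fin n),
      ∃ (d : ℕ) (H : Finset (Fin n × Fin n)), IsShortcut G d H ∧
        (H.card : ℝ) ≤ C * (n : ℝ) ∧ (d : ℝ) ≤ (n : ℝ) ^ (α + γ - 1 - δ)) :
    ∃ C' c' : ℝ, 1 ≤ C' ∧ 1 ≤ c' ∧
      ∀ n : ℕ, ∀ G : WDigraph (Fin n), ∀ P : Finset (Fin n × Fin n), P.card ≤ n →
        ∃ Estar ⊆ G.edges,
          (Estar.card : ℝ) ≤ C' * (n : ℝ) ^ (α + γ - δ) * (Real.log n) ^ c' ∧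
          ∀ uv ∈ P, G.Reachable uv.1 uv.2 → (G.sub Estar).Reachable uv.1 uv.2 := by
  classical
  have hy : α + γ - δ = (α + γ - 1 - δ) + 1 := by ring
  have hy1 : 1 ≤ α + γ - δ := by linarith
  have hyne : α + γ - δ ≠ 0 := by linarith
  refine ⟨28 * C, 1, by linarith, le_refl 1, ?_⟩
  intro n G P hPcard
  by_cases hn2 : n < 2
  · refine ⟨∅, Finset.empty_subset _, ?_, ?_⟩
    · have hrw : (Real.log n) ^ (1:ℝ) = Real.log n := Real.rpow_one _
      interval_cases n
      · simp only [Finset.card_empty, Nat.cast_zero, hrw, Real.log_zero, mul_zero]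
        rw [Real.zero_rpow hyne]
        simp
      · simp only [Finset.card_empty, Nat.cast_zero, Nat.cast_one, Real.log_one]
        rw [Real.zero_rpow one_ne_zero]
        simp
    · intro uv huv hr
      have hn : n = 0 ∨ n = 1 := by omega
      rcases hn with h | h
      · subst h; exact uv.1.elim0
      · subst h
        have : uv.1 = uv.2 := Subsingleton.elim _ _
        exact ⟨[], this⟩
  push_neg at hn2
  -- main construction
  set X := α + γ - 1 - δ with hX
  set y := α + γ - δ with hYdef
  have hyX : y = X + 1 := hy
  set PD : Finset (ℕ × ℕ) := (P.filter (fun p => G.Reachable p.1 p.2)).image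
    (fun p => ((rnk G p.1, rnk G p.2) : ℕ × ℕ)) with hPD
  have hPDcond : ∀ q ∈ PD, 0 ≤ q.1 ∧ q.1 < 0 + n ∧ 0 ≤ q.2 ∧ q.2 < 0 + n ∧
      (DD G).Reachable q.1 q.2 := by
    intro q hq
    obtain ⟨p, hpf, heq⟩ := Finset.mem_image.1 hq
    obtain ⟨hpP, hpr⟩ := Finset.mem_filter.1 hpf
    obtain ⟨l, hl⟩ := hpr
    subst heq
    have := rnk_lt_n G p.1
    have := rnk_lt_n G p.2
    exact ⟨Nat.zero_le _, by omega, Nat.zero_le _, by omega, DD_fwd G hl⟩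
  have hPDcard : ((PD.card : ℕ) : ℝ) ≤ 4 * C * n := by
    have h1 : PD.card ≤ P.card := le_trans Finset.card_image_le (Finset.card_filter_le _ _)
    have h2 : (PD.card : ℝ) ≤ (n : ℝ) := by exact_mod_cast le_trans h1 hPcard
    nlinarith [Nat.cast_nonneg (α := ℝ) n]
  obtain ⟨F, hFsub, hFcard, hFserve⟩ := core C X y hC h1 hyX hyp (DD G) (DD_mono G) n 0
    PD hPDcond hPDcard
  have hexwit : ∀ e : {x // x ∈ F}, ∃ g : Fin n × Fin n, g ∈ G.edges ∧
      (((rnk G g.1 : ℕ), (rnk G g.2 : ℕ)) : ℕ × ℕ) = (e : ℕ × ℕ) := by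
    intro e
    have hmem := hFsub e.2
    have := (Finset.mem_filter.1 hmem).1
    obtain ⟨g, hg, heq⟩ := Finset.mem_image.1 this
    exact ⟨g, hg, heq⟩
  choose witf hwitf1 hwitf2 using hexwit
  set Fwit : Finset (Fin n × Fin n) := F.attach.image witf with hFwit
  set Estar : Finset (Fin n × Fin n) := TreeE G ∪ Fwit with hEstar
  have hEsub : Estar ⊆ G.edges := by
    apply Finset.union_subset (treeE_sub G)
    intro x hx
    obtain ⟨e, _, heq⟩ := Finset.mem_image.1 hx
    rw [← heq]
    exact hwitf1 e
  refine ⟨Estar, hEsub, ?_, ?_⟩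
  · -- cardinality
    have hcN : Estar.card ≤ 2 * n + F.card := by
      calc Estar.card ≤ (TreeE G).card + Fwit.card := Finset.card_union_le _ _
      _ ≤ 2 * n + Fwit.card := add_le_add_left (treeE_card G) _
      _ ≤ 2 * n + F.card := by
          refine add_le_add_right (le_trans Finset.card_image_le ?_) _
          rw [Finset.card_attach]
    have hcR : (Estar.card : ℝ) ≤ 2 * n + (F.card : ℝ) := by exact_mod_cast hcN
    have hclog := clog_le_log hn2
    have hlog2 := Real.log_two_gt_d9
    have hlogn : Real.log 2 ≤ Real.log n := Real.log_le_log (by norm_num) (by exact_mod_cast hn2)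
    have hny0 : (0:ℝ) ≤ (n:ℝ) ^ y := Real.rpow_nonneg (Nat.cast_nonneg n) y
    have hn1 : (1:ℝ) ≤ (n:ℝ) := by
      have : (1:ℕ) ≤ n := by omega
      exact_mod_cast this
    have hny : (n:ℝ) ≤ (n:ℝ) ^ y := by
      calc (n:ℝ) = (n:ℝ) ^ (1:ℝ) := (Real.rpow_one _).symm
      _ ≤ (n:ℝ) ^ y := Real.rpow_le_rpow_of_exponent_le hn1 hy1
    have hF2 : (F.card : ℝ) ≤ 5 * C * (5 * Real.log n) * (n:ℝ) ^ y := by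
      refine le_trans hFcard ?_
      refine mul_le_mul_of_nonneg_right ?_ hny0
      have hC0 : (0:ℝ) ≤ 5 * C := by linarith
      exact mul_le_mul_of_nonneg_left hclog hC0
    have h2logn : (2:ℝ) ≤ 3 * Real.log n := by nlinarith
    have ht1 : 2 * (n:ℝ) ≤ 3 * Real.log n * ((n:ℝ) ^ y) := by
      have step1 : 2 * (n:ℝ) ≤ 2 * ((n:ℝ) ^ y) := by linarith
      have step2 : 2 * ((n:ℝ) ^ y) ≤ 3 * Real.log n * ((n:ℝ) ^ y) :=
        mul_le_mul_of_nonneg_right h2logn hny0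
      linarith
    have hgoal : (Estar.card : ℝ) ≤ 28 * C * ((n:ℝ) ^ y) * Real.log n := by
      have hlogpos : (0:ℝ) ≤ Real.log n := by nlinarith
      have hprod : (0:ℝ) ≤ Real.log n * ((n:ℝ) ^ y) := mul_nonneg hlogpos hny0
      nlinarith [hcR, hF2, ht1, hprod, hC]
    calc (Estar.card : ℝ) ≤ 28 * C * ((n:ℝ) ^ y) * Real.log n := hgoal
    _ = 28 * C * ((n:ℝ) ^ y) * (Real.log n) ^ (1:ℝ) := by rw [Real.rpow_one]
  · -- serving
    intro uv huv hr
    have hq : ((rnk G uv.1, rnk G uv.2) : ℕ × ℕ) ∈ PD :=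
      Finset.mem_image.2 ⟨uv, Finset.mem_filter.2 ⟨huv, hr⟩, rfl⟩
    obtain ⟨l, hl⟩ := hFserve _ hq
    refine lift_walk G (Finset.subset_union_left) ?_ l _ _ hl uv.1 uv.2 rfl rfl
    intro e he
    exact ⟨witf ⟨e, he⟩, Finset.mem_union_right _
      (Finset.mem_image.2 ⟨⟨e, he⟩, Finset.mem_attach _ _, rfl⟩), hwitf1 _, hwitf2 _⟩

end Stmt19

open Hopsets in
/-- If every `n`-vertex directed graph admits a `d`-shortcut of size at
most `C·n` with `d ≤ n^{α+γ−1−δ}`, then every `n`-vertex directed graph and every set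
`P` of at most `n` pairs admit a reachability preserver (a subgraph preserving
reachability for all pairs of `P`) with at most `C'·n^{α+γ−δ}·(log n)^{c'}` edges. -/
theorem stmt_19 (C α γ δ : ℝ) (hC : 1 ≤ C)
    (h1 : 0 < α + γ - 1 - δ) (h2 : α + γ - 1 - δ < 1)
    (hyp : ∀ n : ℕ, ∀ G : WDigraph (Fin n),
      ∃ (d : ℕ) (H : Finset (Fin n × Fin n)), IsShortcut G d H ∧
        (H.card : ℝ) ≤ C * (n : ℝ) ∧ (d : ℝ) ≤ (n : ℝ) ^ (α + γ - 1 - δ)) :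
    ∃ C' c' : ℝ, 1 ≤ C' ∧ 1 ≤ c' ∧
      ∀ n : ℕ, ∀ G : WDigraph (Fin n), ∀ P : Finset (Fin n × Fin n), P.card ≤ n →
        ∃ Estar ⊆ G.edges,
          (Estar.card : ℝ) ≤ C' * (n : ℝ) ^ (α + γ - δ) * (Real.log n) ^ c' ∧
          ∀ uv ∈ P, G.Reachable uv.1 uv.2 → (G.sub Estar).Reachable uv.1 uv.2 :=
  Stmt19.stmt19main C α γ δ hC h1 h2 hyp
end
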